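/- arXiv:1811.09526 — 4 statements merged into one kernel-verified Lean document; each statement's English description precedes it below -/
import Mathlib

section
/- Assume (G,K,θ) is a multiplicity-free triple. For σ an irreducible unitary G-representation on W_σ contained in Ind_K^G θ, set w^σ = L_σ v ∈ W_σ and φ^σ(g) = ⟨w^σ, σ(g)w^σ⟩. Then φ^σ is a spherical function of the triple (G,K,θ); in particular it satisfies the functional equation Σ_{k∈K} φ^σ(gkh)·conj(ψ(k)) = φ^σ(g)·φ^σ(h) for all g,h ∈ G. Moreover, for σ, ρ two irreducible G-representations contained in Ind_K^G θ, the orthogonality relations ⟨φ^σ, φ^ρ⟩_{L(G)} = (|G|/d_σ)·δ_{σ,ρ} hold, where δ_{σ,ρ} = 1 if σ ≅ ρ and 0 otherwise. -/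
open scoped BigOperators ComplexConjugate Classical

set_option linter.unusedSectionVars false
set_option synthInstance.maxHeartbeats 1000000
set_option maxHeartbeats 1000000

noncomputable section

namespace MFT

variable {G : Type} [Group G] [Fintype G]
variable {V : Type} [NormedAddCommGroup V] [InnerProductSpace ℂ V] [FiniteDimensional ℂ V]

/-- Left translation of functions on `G`: `(translate h f) g = f (h⁻¹ * g)`.
This is the left regular action of `G`. -/
def translate {A : Type} (h : G) (f : G → A) : G → A := fun g => f (h⁻¹ * g)

/-- A representation by linear automorphisms is unitary if it preserves the inner product. -/
def IsUnitaryRep {H W : Type} [Group H] [NormedAddCommGroup W] [InnerProductSpace ℂ W]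
    (ρ : H →* (W ≃ₗ[ℂ] W)) : Prop :=
  ∀ (h : H) (x y : W), (inner ℂ (ρ h x) (ρ h y) : ℂ) = (inner ℂ x y : ℂ)

/-- Irreducibility of a representation: the space is nonzero and has no proper nonzero
invariant subspace. -/
def IsIrreducibleRep {H W : Type} [Group H] [AddCommGroup W] [Module ℂ W]
    (ρ : H →* (W ≃ₗ[ℂ] W)) : Prop :=
  (⊥ : Submodule ℂ W) ≠ ⊤ ∧
    ∀ p : Submodule ℂ W, (∀ (h : H) (x : W), x ∈ p → ρ h x ∈ p) → p = ⊥ ∨ p = ⊤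

variable (K : Subgroup G) (θ : ↥K →* (V ≃ₗ[ℂ] V))

/-- The space `Ind_K^G V` of the representation induced by `θ`:
functions `f : G → V` with `f (g k) = θ k⁻¹ (f g)`. -/
def ind : Submodule ℂ (G → V) where
  carrier := {f | ∀ (g : G) (k : K), f (g * (k : G)) = θ k⁻¹ (f g)}
  add_mem' := by
    intro f₁ f₂ h₁ h₂ g k
    simp only [Pi.add_apply, h₁ g k, h₂ g k, map_add]
  zero_mem' := by intro g k; simp
  smul_mem' := by
    intro c f hf g k
    simp only [Pi.smul_apply, hf g k, map_smul]

theorem translate_mem_ind {f : G → V} (hf : f ∈ ind K θ) (h : G) : translate h f ∈ ind K θ := by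
  intro g k
  simpa [translate, mul_assoc] using hf (h⁻¹ * g) k

/-- The left regular action of `G` on the induced space, `λ(h) f = f (h⁻¹ ·)`. -/
def lamL (h : G) : ↥(ind K θ) →ₗ[ℂ] ↥(ind K θ) where
  toFun f := ⟨translate h ↑f, translate_mem_ind K θ f.2 h⟩
  map_add' f₁ f₂ := by apply Subtype.ext; funext g; simp [translate]
  map_smul' c f := by apply Subtype.ext; funext g; simp [translate]

instance : AddCommGroup (↥(ind K θ) →ₗ[ℂ] ↥(ind K θ)) := LinearMap.addCommGroup

instance : Module ℂ (↥(ind K θ) →ₗ[ℂ] ↥(ind K θ)) := LinearMap.module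

/-- The Hecke algebra condition: `F (k₁ g k₂) = θ k₂⁻¹ ∘ F g ∘ θ k₁⁻¹`. -/
def IsHecke (F : G → (V →ₗ[ℂ] V)) : Prop :=
  ∀ (g : G) (k₁ k₂ : K),
    F ((k₁ : G) * g * (k₂ : G)) = (θ k₂⁻¹).toLinearMap ∘ₗ F g ∘ₗ (θ k₁⁻¹).toLinearMap

/-- Convolution on the Hecke algebra: `(F₁ * F₂) g = ∑ h, F₁ (h⁻¹ g) ∘ F₂ h`. -/
def heckeConv (F₁ F₂ : G → (V →ₗ[ℂ] V)) : G → (V →ₗ[ℂ] V) :=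
  fun g => ∑ h : G, F₁ (h⁻¹ * g) ∘ₗ F₂ h

/-- Involution on the Hecke algebra: `F* g = (F g⁻¹)*`. -/
def heckeStar (F : G → (V →ₗ[ℂ] V)) : G → (V →ₗ[ℂ] V) :=
  fun g => LinearMap.adjoint (F g⁻¹)

/-- The inner product on the Hecke algebra:
`⟨F₁, F₂⟩ = ∑ g, (dim V)⁻¹ tr (F₂(g)* ∘ F₁(g))`. -/
def heckeInner (F₁ F₂ : G → (V →ₗ[ℂ] V)) : ℂ :=
  ∑ g : G, (Module.finrank ℂ V : ℂ)⁻¹ *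
    LinearMap.trace ℂ V (LinearMap.adjoint (F₂ g) ∘ₗ F₁ g)

/-- `(ξ F) f g = ∑ h, F (h⁻¹ g) (f h)`. -/
def xiFun (F : G → (V →ₗ[ℂ] V)) (f : G → V) : G → V := fun g => ∑ h : G, F (h⁻¹ * g) (f h)

/-- `ξ F` as a linear endomorphism of `G → V`. -/
def xiL (F : G → (V →ₗ[ℂ] V)) : (G → V) →ₗ[ℂ] (G → V) where
  toFun := xiFun F
  map_add' f₁ f₂ := by funext g; simp [xiFun, Finset.sum_add_distrib]
  map_smul' c f := by funext g; simp [xiFun, Finset.smul_sum]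

/-- The paper's inner product on the induced space:
`⟨f₁, f₂⟩ = |K|⁻¹ ∑ g, ⟨f₁ g, f₂ g⟩_V` (conjugate-linear in the second variable). -/
def innerInd (f₁ f₂ : G → V) : ℂ := (Nat.card K : ℂ)⁻¹ * ∑ g : G, (inner ℂ (f₂ g) (f₁ g) : ℂ)

/-- Convolution of complex valued functions on `G`. -/
def convC (f₁ f₂ : G → ℂ) : G → ℂ := fun g => ∑ h : G, f₁ h * f₂ (h⁻¹ * g)

/-- The involution `f* g = conj (f g⁻¹)` on `L(G)`. -/
def starC (f : G → ℂ) : G → ℂ := fun g => conj (f g⁻¹)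

/-- The paper's inner product on `L(G)`: `⟨f₁, f₂⟩ = ∑ g, f₁ g • conj (f₂ g)`. -/
def innerC (f₁ f₂ : G → ℂ) : ℂ := ∑ g : G, f₁ g * conj (f₂ g)

/-- The function `ψ (k) = (d_θ/|K|) ⟨v, θ k v⟩` on `K`, extended by `0` on `G \ K`. -/
def psi (v : V) : G → ℂ := fun g =>
  if h : g ∈ K then ((Module.finrank ℂ V : ℂ) / (Nat.card K : ℂ)) * (inner ℂ (θ ⟨g, h⟩ v) v : ℂ)
  else 0

/-- `(T_v f) g = √(d_θ/|K|) ⟨f g, v⟩`. -/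
def Tv (v : V) (f : G → V) : G → ℂ := fun g =>
  (Real.sqrt ((Module.finrank ℂ V : ℝ) / (Nat.card K : ℝ)) : ℂ) * (inner ℂ v (f g) : ℂ)

/-- The Hecke algebra `H(G,K,ψ) = {f : f = ψ * f * ψ}` as a set. -/
def HSet (v : V) : Set (G → ℂ) := {f | convC (convC (psi K θ v) f) (psi K θ v) = f}

/-- `(S_v F) g = d_θ ⟨F g v, v⟩`. -/
def Sv (v : V) (F : G → (V →ₗ[ℂ] V)) : G → ℂ :=
  fun g => (Module.finrank ℂ V : ℂ) * (inner ℂ v (F g v) : ℂ)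

/-- A spherical function: an element of `H(G,K,ψ)` taking value `1` at the identity which
is an eigenvector of all convolution operators coming from `H(G,K,ψ)`. -/
def IsSpherical (v : V) (φ : G → ℂ) : Prop :=
  φ ∈ HSet K θ v ∧ φ 1 = 1 ∧ ∀ f ∈ HSet K θ v, ∃ c : ℂ, convC φ f = c • φ

/-- The intertwining space `Hom_{K_s}(Res^K_{K_s} θ, θ^s)` where `K_s = K ∩ s K s⁻¹`
and `θ^s (x) = θ (s⁻¹ x s)`. -/
def interSpace (s : G) : Submodule ℂ (V →ₗ[ℂ] V) where
  carrier := {T | ∀ (x : G) (hx : x ∈ K) (hx' : s⁻¹ * x * s ∈ K),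
      T ∘ₗ (θ ⟨x, hx⟩).toLinearMap = (θ ⟨s⁻¹ * x * s, hx'⟩).toLinearMap ∘ₗ T}
  add_mem' := by
    intro a b ha hb x hx hx'
    simp only [LinearMap.add_comp, LinearMap.comp_add, ha x hx hx', hb x hx hx']
  zero_mem' := by
    intro x hx hx'
    simp
  smul_mem' := by
    intro c a ha x hx hx'
    simp only [LinearMap.smul_comp, LinearMap.comp_smul, ha x hx hx']

/-- `S` is a complete set of representatives of the double cosets `K\G/K`. -/
def IsDoubleCosetReps (S : Finset G) : Prop :=
  ∀ g : G, ∃! s : G, s ∈ S ∧ ∃ k₁ k₂ : K, g = (k₁ : G) * s * (k₂ : G)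

/-- The commutant `End_G(Ind_K^G V)`. -/
def commutant : Submodule ℂ (↥(ind K θ) →ₗ[ℂ] ↥(ind K θ)) where
  carrier := {T | ∀ (h : G) (f : ↥(ind K θ)), T (lamL K θ h f) = lamL K θ h (T f)}
  add_mem' := by
    intro a b ha hb h f
    simp [ha h f, hb h f]
  zero_mem' := by intro h f; simp
  smul_mem' := by
    intro c a ha h f
    simp [ha h f]

/-- The space `Hom_G(W, Ind_K^G V)` of `G`-equivariant linear maps from `(σ, W)` to the
induced representation. -/
def homGInd {W : Type} [AddCommGroup W] [Module ℂ W] (σ : G →* (W ≃ₗ[ℂ] W)) :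
    Submodule ℂ (W →ₗ[ℂ] (G → V)) where
  carrier := {A | (∀ w : W, A w ∈ ind K θ) ∧ ∀ (g : G) (w : W), A (σ g w) = translate g (A w)}
  add_mem' := by
    rintro A B ⟨hA₁, hA₂⟩ ⟨hB₁, hB₂⟩
    refine ⟨fun w => (ind K θ).add_mem (hA₁ w) (hB₁ w), fun g w => ?_⟩
    funext x
    simp [translate, hA₂ g w, hB₂ g w, Pi.add_apply]
  zero_mem' := by
    refine ⟨fun w => (ind K θ).zero_mem, fun g w => ?_⟩
    funext x
    simp [translate]
  smul_mem' := by
    rintro c A ⟨hA₁, hA₂⟩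
    refine ⟨fun w => (ind K θ).smul_mem c (hA₁ w), fun g w => ?_⟩
    funext x
    simp [translate, hA₂ g w]

/-- `Ind_K^G θ` is multiplicity-free: every irreducible representation of `G` occurs with
multiplicity at most `1`. -/
def IsMultFree : Prop :=
  ∀ (W : Type) [AddCommGroup W] [Module ℂ W] [FiniteDimensional ℂ W]
    (σ : G →* (W ≃ₗ[ℂ] W)), IsIrreducibleRep σ → Module.finrank ℂ ↥(homGInd K θ σ) ≤ 1

theorem convC_add_left (f₁ f₂ g : G → ℂ) : convC (f₁ + f₂) g = convC f₁ g + convC f₂ g := by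
  funext x
  simp [convC, add_mul, Finset.sum_add_distrib]

theorem convC_add_right (f g₁ g₂ : G → ℂ) : convC f (g₁ + g₂) = convC f g₁ + convC f g₂ := by
  funext x
  simp [convC, mul_add, Finset.sum_add_distrib]

theorem convC_smul_left (c : ℂ) (f g : G → ℂ) : convC (c • f) g = c • convC f g := by
  funext x
  simp [convC, Finset.mul_sum, mul_assoc]

theorem convC_smul_right (c : ℂ) (f g : G → ℂ) : convC f (c • g) = c • convC f g := by
  funext x
  simp [convC, Finset.mul_sum, mul_left_comm]

theorem convC_zero_left (g : G → ℂ) : convC 0 g = 0 := by funext x; simp [convC]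

theorem convC_zero_right (f : G → ℂ) : convC f 0 = 0 := by funext x; simp [convC]

/-- The Hecke algebra `H(G,K,ψ)` as a subspace of `L(G)`. -/
def heckeSub (v : V) : Submodule ℂ (G → ℂ) where
  carrier := HSet K θ v
  add_mem' := by
    intro a b ha hb
    have ha' : convC (convC (psi K θ v) a) (psi K θ v) = a := ha
    have hb' : convC (convC (psi K θ v) b) (psi K θ v) = b := hb
    show convC (convC (psi K θ v) (a + b)) (psi K θ v) = a + b
    rw [convC_add_right, convC_add_left, ha', hb']
  zero_mem' := by
    show convC (convC (psi K θ v) 0) (psi K θ v) = 0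
    rw [convC_zero_right, convC_zero_left]
  smul_mem' := by
    intro c a ha
    have ha' : convC (convC (psi K θ v) a) (psi K θ v) = a := ha
    show convC (convC (psi K θ v) (c • a)) (psi K θ v) = c • a
    rw [convC_smul_right, convC_smul_left, ha']

/-- The subspace `I(G,K,ψ) = {f ∈ L(G) : f * ψ = f}`. -/
def ISub (v : V) : Submodule ℂ (G → ℂ) where
  carrier := {φ | convC φ (psi K θ v) = φ}
  add_mem' := by
    intro a b ha hb
    have ha' : convC a (psi K θ v) = a := ha
    have hb' : convC b (psi K θ v) = b := hb
    show convC (a + b) (psi K θ v) = a + b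
    rw [convC_add_left, ha', hb']
  zero_mem' := by
    show convC 0 (psi K θ v) = 0
    rw [convC_zero_left]
  smul_mem' := by
    intro c a ha
    have ha' : convC a (psi K θ v) = a := ha
    show convC (c • a) (psi K θ v) = c • a
    rw [convC_smul_left, ha']

/-- The subspace of `L(G)` spanned by the left translates of `φ`. -/
def sphSpan (φ : G → ℂ) : Submodule ℂ (G → ℂ) :=
  Submodule.span ℂ (Set.range fun g : G => translate g φ)

/-- A submodule of functions on `G` invariant under all left translations. -/
def IsInvariantSub {A : Type} [AddCommGroup A] [Module ℂ A] (p : Submodule ℂ (G → A)) : Prop :=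
  ∀ h : G, ∀ f ∈ p, translate h f ∈ p

/-- `p` is an irreducible `G`-invariant subspace of the induced representation. -/
def IsIrredSubOfInd (p : Submodule ℂ (G → V)) : Prop :=
  p ≤ ind K θ ∧ IsInvariantSub p ∧ p ≠ ⊥ ∧
    ∀ q : Submodule ℂ (G → V), q ≤ p → IsInvariantSub q → q = ⊥ ∨ q = p

/-- The matrix coefficient `φ^σ (g) = ⟨w^σ, σ(g) w^σ⟩` where `w^σ = L_σ v`. -/
def phiRep {W : Type} [NormedAddCommGroup W] [InnerProductSpace ℂ W]
    (σ : G →* (W ≃ₗ[ℂ] W)) (L : V →ₗ[ℂ] W) (v : V) : G → ℂ :=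
  fun g => (inner ℂ (σ g (L v)) (L v) : ℂ)

/-- Two representations are equivalent. -/
def ReprEquiv {W₁ W₂ : Type} [AddCommGroup W₁] [Module ℂ W₁] [AddCommGroup W₂] [Module ℂ W₂]
    (σ : G →* (W₁ ≃ₗ[ℂ] W₁)) (ρ : G →* (W₂ ≃ₗ[ℂ] W₂)) : Prop :=
  ∃ e : W₁ ≃ₗ[ℂ] W₂, ∀ (g : G) (w : W₁), e (σ g w) = ρ g (e w)

section AuxiliaryLemmas

open scoped InnerProductSpace

variable {H : Type} [Group H] [Fintype H]
variable {W : Type} [NormedAddCommGroup W] [InnerProductSpace ℂ W] [FiniteDimensional ℂ W]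

lemma rep_mul_apply (π : H →* (W ≃ₗ[ℂ] W)) (a b : H) (x : W) :
    π (a * b) x = π a (π b x) := by rw [map_mul]; rfl

lemma rep_inv_apply (π : H →* (W ≃ₗ[ℂ] W)) (h : H) (x : W) : π h⁻¹ (π h x) = x := by
  rw [← rep_mul_apply, inv_mul_cancel, map_one]; rfl

lemma unitary_inner_left (π : H →* (W ≃ₗ[ℂ] W)) (hu : IsUnitaryRep π) (h : H) (x y : W) :
    ⟪π h x, y⟫_ℂ = ⟪x, π h⁻¹ y⟫_ℂ := by
  have := hu h⁻¹ (π h x) y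
  rw [rep_inv_apply] at this
  exact this.symm

lemma unitary_inner_right (π : H →* (W ≃ₗ[ℂ] W)) (hu : IsUnitaryRep π) (h : H) (x y : W) :
    ⟪x, π h y⟫_ℂ = ⟪π h⁻¹ x, y⟫_ℂ := by
  have := hu h⁻¹ x (π h y)
  rw [rep_inv_apply] at this
  exact this.symm

lemma nontrivial_of_irr {W' : Type} [AddCommGroup W'] [Module ℂ W'] {π : H →* (W' ≃ₗ[ℂ] W')}
    (hirr : IsIrreducibleRep π) : Nontrivial W' := by
  by_contra hn
  rw [not_nontrivial_iff_subsingleton] at hn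
  refine hirr.1 ?_
  ext x
  simp [Subsingleton.elim x 0]

lemma schur_scalar (π : H →* (W ≃ₗ[ℂ] W)) (hirr : IsIrreducibleRep π) (T : W →ₗ[ℂ] W)
    (hT : ∀ (h : H) (x : W), T (π h x) = π h (T x)) : ∃ c : ℂ, ∀ x, T x = c • x := by
  have hnt : Nontrivial W := nontrivial_of_irr hirr
  obtain ⟨c, hc⟩ := Module.End.exists_eigenvalue (T : Module.End ℂ W)
  refine ⟨c, ?_⟩
  have hinv : ∀ (h : H) (x : W), x ∈ Module.End.eigenspace (T : Module.End ℂ W) c →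
      π h x ∈ Module.End.eigenspace (T : Module.End ℂ W) c := by
    intro h x hx
    rw [Module.End.mem_eigenspace_iff] at hx ⊢
    show T (π h x) = c • π h x
    rw [hT, hx, map_smul]
  rcases hirr.2 _ hinv with h0 | h1
  · exact absurd h0 hc
  · intro x
    have hx : x ∈ Module.End.eigenspace (T : Module.End ℂ W) c := by rw [h1]; trivial
    exact Module.End.mem_eigenspace_iff.mp hx

lemma schur_avg (π : H →* (W ≃ₗ[ℂ] W)) (hu : IsUnitaryRep π) (hirr : IsIrreducibleRep π)
    (c a x : W) :
    ∑ h : H, ⟪c, π h x⟫_ℂ • (π h⁻¹ a) =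
      ((Fintype.card H : ℂ) * ⟪c, a⟫_ℂ / (Module.finrank ℂ W : ℂ)) • x := by
  have hnt : Nontrivial W := nontrivial_of_irr hirr
  have hd0 : ((Module.finrank ℂ W : ℂ)) ≠ 0 := by
    exact_mod_cast Nat.cast_ne_zero.mpr (Module.finrank_pos (R := ℂ) (M := W)).ne'
  set T : W →ₗ[ℂ] W :=
    { toFun := fun y => ∑ h : H, ⟪c, π h y⟫_ℂ • (π h⁻¹ a)
      map_add' := fun y z => by
        simp only [map_add, inner_add_right, add_smul, Finset.sum_add_distrib]
      map_smul' := fun r y => by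
        simp only [map_smul, inner_smul_right, RingHom.id_apply, Finset.smul_sum, mul_smul] }
    with hTdef
  have hT : ∀ (m : H) (y : W), T (π m y) = π m (T y) := by
    intro m y
    show ∑ h : H, ⟪c, π h (π m y)⟫_ℂ • (π h⁻¹ a) = π m (∑ h : H, ⟪c, π h y⟫_ℂ • (π h⁻¹ a))
    rw [map_sum]
    refine (Fintype.sum_equiv (Equiv.mulRight m⁻¹)
      (fun j => π m (⟪c, π j y⟫_ℂ • (π j⁻¹ a)))
      (fun h => ⟪c, π h (π m y)⟫_ℂ • (π h⁻¹ a)) ?_).symm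
    intro j
    show π m (⟪c, π j y⟫_ℂ • (π j⁻¹ a)) = ⟪c, π (j * m⁻¹) (π m y)⟫_ℂ • (π (j * m⁻¹)⁻¹ a)
    rw [← rep_mul_apply]
    have e1 : j * m⁻¹ * m = j := by group
    have e2 : (j * m⁻¹)⁻¹ = m * j⁻¹ := by group
    rw [e1, e2, rep_mul_apply, map_smul]
  obtain ⟨lam, hlam⟩ := schur_scalar π hirr T hT
  -- compute lam via orthonormal basis
  set b := stdOrthonormalBasis ℂ W
  have hway1 : ∑ i, ⟪b i, T (b i)⟫_ℂ = lam * (Module.finrank ℂ W : ℂ) := by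
    have : ∀ i, ⟪b i, T (b i)⟫_ℂ = lam := by
      intro i
      rw [hlam, inner_smul_right]
      have : ⟪b i, b i⟫_ℂ = 1 := by
        rw [inner_self_eq_norm_sq_to_K, b.orthonormal.1 i]
        norm_num
      rw [this, mul_one]
    simp [this, Finset.sum_const, mul_comm]
  have hway2 : ∑ i, ⟪b i, T (b i)⟫_ℂ = (Fintype.card H : ℂ) * ⟪c, a⟫_ℂ := by
    have hterm : ∀ i, ⟪b i, T (b i)⟫_ℂ = ∑ h : H, ⟪π h⁻¹ c, b i⟫_ℂ * ⟪b i, π h⁻¹ a⟫_ℂ := by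
      intro i
      show ⟪b i, ∑ h : H, ⟪c, π h (b i)⟫_ℂ • (π h⁻¹ a)⟫_ℂ = _
      rw [inner_sum]
      refine Finset.sum_congr rfl fun h _ => ?_
      rw [inner_smul_right, unitary_inner_right π hu]
    calc ∑ i, ⟪b i, T (b i)⟫_ℂ
        = ∑ h : H, ∑ i, ⟪π h⁻¹ c, b i⟫_ℂ * ⟪b i, π h⁻¹ a⟫_ℂ := by
          rw [Finset.sum_comm]
          exact Finset.sum_congr rfl fun i _ => hterm i
      _ = ∑ _h : H, ⟪c, a⟫_ℂ := by
          refine Finset.sum_congr rfl fun h _ => ?_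
          rw [b.sum_inner_mul_inner, hu]
      _ = (Fintype.card H : ℂ) * ⟪c, a⟫_ℂ := by
          simp [Finset.sum_const, mul_comm]
  have hlamval : lam = (Fintype.card H : ℂ) * ⟪c, a⟫_ℂ / (Module.finrank ℂ W : ℂ) := by
    field_simp
    rw [← hway1, hway2]
  have := hlam x
  rw [hlamval] at this
  exact this

end AuxiliaryLemmas

section AuxiliaryLemmas2

open scoped InnerProductSpace

lemma cross_zero {W₁ W₂ : Type} [AddCommGroup W₁] [Module ℂ W₁] [AddCommGroup W₂] [Module ℂ W₂]
    (σ : G →* (W₁ ≃ₗ[ℂ] W₁)) (ρ : G →* (W₂ ≃ₗ[ℂ] W₂))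
    (hirrσ : IsIrreducibleRep σ) (hirrρ : IsIrreducibleRep ρ) (hne : ¬ ReprEquiv σ ρ)
    (B : W₁ →ₗ[ℂ] W₂) (hB : ∀ (g : G) (x : W₁), B (σ g x) = ρ g (B x)) : B = 0 := by
  by_contra hB0
  have hker : ∀ (g : G) (x : W₁), x ∈ LinearMap.ker B → σ g x ∈ LinearMap.ker B := by
    intro g x hx
    rw [LinearMap.mem_ker] at hx ⊢
    rw [hB, hx, map_zero]
  have hrange : ∀ (g : G) (y : W₂), y ∈ LinearMap.range B → ρ g y ∈ LinearMap.range B := by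
    rintro g y ⟨x, rfl⟩
    exact ⟨σ g x, hB g x⟩
  rcases hirrσ.2 _ hker with hk | hk
  · rcases hirrρ.2 _ hrange with hr | hr
    · exact hB0 (LinearMap.range_eq_bot.mp hr)
    · have hbij : Function.Bijective B :=
        ⟨LinearMap.ker_eq_bot.mp hk, LinearMap.range_eq_top.mp hr⟩
      exact hne ⟨LinearEquiv.ofBijective B hbij, fun g x => hB g x⟩
  · exact hB0 (LinearMap.ker_eq_top.mp hk)

lemma cross_avg {W₁ W₂ : Type}
    [NormedAddCommGroup W₁] [InnerProductSpace ℂ W₁] [FiniteDimensional ℂ W₁]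
    [NormedAddCommGroup W₂] [InnerProductSpace ℂ W₂] [FiniteDimensional ℂ W₂]
    (σ : G →* (W₁ ≃ₗ[ℂ] W₁)) (ρ : G →* (W₂ ≃ₗ[ℂ] W₂))
    (hirrσ : IsIrreducibleRep σ) (hirrρ : IsIrreducibleRep ρ) (hne : ¬ ReprEquiv σ ρ)
    (c x : W₁) (b : W₂) :
    ∑ g : G, ⟪c, σ g⁻¹ x⟫_ℂ • (ρ g b) = 0 := by
  set T : W₁ →ₗ[ℂ] W₂ :=
    { toFun := fun y => ∑ g : G, ⟪c, σ g⁻¹ y⟫_ℂ • (ρ g b)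
      map_add' := fun y z => by
        simp only [map_add, inner_add_right, add_smul, Finset.sum_add_distrib]
      map_smul' := fun r y => by
        simp only [map_smul, inner_smul_right, RingHom.id_apply, Finset.smul_sum, mul_smul] }
    with hTdef
  have hT : ∀ (m : G) (y : W₁), T (σ m y) = ρ m (T y) := by
    intro m y
    show ∑ g : G, ⟪c, σ g⁻¹ (σ m y)⟫_ℂ • (ρ g b) = ρ m (∑ g : G, ⟪c, σ g⁻¹ y⟫_ℂ • (ρ g b))
    rw [map_sum]
    refine (Fintype.sum_equiv (Equiv.mulLeft m)
      (fun j => ρ m (⟪c, σ j⁻¹ y⟫_ℂ • (ρ j b)))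
      (fun g => ⟪c, σ g⁻¹ (σ m y)⟫_ℂ • (ρ g b)) ?_).symm
    intro j
    show ρ m (⟪c, σ j⁻¹ y⟫_ℂ • (ρ j b)) = ⟪c, σ (m * j)⁻¹ (σ m y)⟫_ℂ • (ρ (m * j) b)
    have e1 : σ (m * j)⁻¹ (σ m y) = σ j⁻¹ y := by
      rw [← rep_mul_apply]
      congr 1
      group
    rw [e1, rep_mul_apply, map_smul]
  have hT0 : T = 0 := cross_zero σ ρ hirrσ hirrρ hne T hT
  show T x = 0
  rw [hT0]
  rfl

lemma psi_coe (K : Subgroup G) (θ : ↥K →* (V ≃ₗ[ℂ] V)) (v : V) (k : ↥K) :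
    psi K θ v ↑k =
      ((Module.finrank ℂ V : ℂ) / (Nat.card ↥K : ℂ)) * ⟪θ k v, v⟫_ℂ := by
  simp only [psi]
  rw [dif_pos k.2]

lemma psi_zero (K : Subgroup G) (θ : ↥K →* (V ≃ₗ[ℂ] V)) (v : V) {g : G} (hg : g ∉ K) :
    psi K θ v g = 0 := by
  simp only [psi]
  rw [dif_neg hg]

lemma sum_G_to_K (K : Subgroup G) (F : G → ℂ) (hF : ∀ g : G, g ∉ K → F g = 0) :
    ∑ g : G, F g = ∑ k : ↥K, F ↑k := by
  classical
  rw [← Finset.sum_filter_of_ne (s := Finset.univ) (p := fun g => g ∈ K)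
    (fun x _ hx => by by_contra hmem; exact hx (hF x hmem))]
  rw [Finset.sum_subtype (p := fun g => g ∈ K) (Finset.univ.filter (fun g => g ∈ K)) (by simp) F]

lemma convC_assoc (a b c : G → ℂ) : convC (convC a b) c = convC a (convC b c) := by
  funext g
  show ∑ h : G, (∑ j : G, a j * b (j⁻¹ * h)) * c (h⁻¹ * g)
      = ∑ j : G, a j * ∑ t : G, b t * c (t⁻¹ * (j⁻¹ * g))
  simp only [Finset.sum_mul, Finset.mul_sum]
  rw [Finset.sum_comm]
  refine Finset.sum_congr rfl fun j _ => ?_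
  refine (Fintype.sum_equiv (Equiv.mulLeft j)
    (fun t => a j * (b t * c (t⁻¹ * (j⁻¹ * g))))
    (fun h => a j * b (j⁻¹ * h) * c (h⁻¹ * g)) ?_).symm
  intro t
  show a j * (b t * c (t⁻¹ * (j⁻¹ * g))) = a j * b (j⁻¹ * (j * t)) * c ((j * t)⁻¹ * g)
  have e1 : j⁻¹ * (j * t) = t := by group
  have e2 : (j * t)⁻¹ * g = t⁻¹ * (j⁻¹ * g) := by group
  rw [e1, e2, mul_assoc]

end AuxiliaryLemmas2

section AuxiliaryLemmas3

open scoped InnerProductSpace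

lemma key_P (K : Subgroup G) (θ : ↥K →* (V ≃ₗ[ℂ] V))
    (hu : IsUnitaryRep θ) (hirr : IsIrreducibleRep θ) (v : V) (hv : ‖v‖ = 1)
    {W₁ : Type} [NormedAddCommGroup W₁] [InnerProductSpace ℂ W₁] [FiniteDimensional ℂ W₁]
    (σ : G →* (W₁ ≃ₗ[ℂ] W₁)) (huσ : IsUnitaryRep σ)
    (L₁ : V →ₗ[ℂ] W₁) (hL₁iso : ∀ x : V, ‖L₁ x‖ = ‖x‖)
    (hL₁equiv : ∀ (k : ↥K) (x : V), L₁ (θ k x) = σ (k : G) (L₁ x))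
    (hL₁span : ∀ A : V →ₗ[ℂ] W₁, (∀ (k : ↥K) (x : V), A (θ k x) = σ (k : G) (A x)) →
      ∃ c : ℂ, A = c • L₁) (u : W₁) :
    ∑ k : ↥K, ⟪θ k v, v⟫_ℂ • σ (k : G) u =
      (((Nat.card ↥K : ℂ) / (Module.finrank ℂ V : ℂ)) * ⟪L₁ v, u⟫_ℂ) • L₁ v := by
  classical
  have hVnt : Nontrivial V := nontrivial_of_irr hirr
  have hvv : ⟪v, v⟫_ℂ = 1 := by
    rw [inner_self_eq_norm_sq_to_K, hv]
    norm_num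
  have hLinner : ∀ x y : V, ⟪L₁ x, L₁ y⟫_ℂ = ⟪x, y⟫_ℂ := fun x y =>
    LinearIsometry.inner_map_map (⟨L₁, hL₁iso⟩ : V →ₗᵢ[ℂ] W₁) x y
  have hww : ⟪L₁ v, L₁ v⟫_ℂ = 1 := by rw [hLinner, hvv]
  set A : V →ₗ[ℂ] W₁ :=
    { toFun := fun x => ∑ k : ↥K, ⟪θ k v, x⟫_ℂ • σ (k : G) u
      map_add' := fun x y => by
        simp only [inner_add_right, add_smul, Finset.sum_add_distrib]
      map_smul' := fun r x => by
        simp only [inner_smul_right, RingHom.id_apply, Finset.smul_sum, mul_smul] }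
    with hAdef
  have hAeq : ∀ (m : ↥K) (x : V), A (θ m x) = σ (m : G) (A x) := by
    intro m x
    show ∑ k : ↥K, ⟪θ k v, θ m x⟫_ℂ • σ (k : G) u
        = σ (m : G) (∑ k : ↥K, ⟪θ k v, x⟫_ℂ • σ (k : G) u)
    rw [map_sum]
    refine (Fintype.sum_equiv (Equiv.mulLeft m)
      (fun j => σ (m : G) (⟪θ j v, x⟫_ℂ • σ (j : G) u))
      (fun k => ⟪θ k v, θ m x⟫_ℂ • σ (k : G) u) ?_).symm
    intro j
    show σ (m : G) (⟪θ j v, x⟫_ℂ • σ (j : G) u)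
        = ⟪θ (m * j) v, θ m x⟫_ℂ • σ ((m * j : ↥K) : G) u
    have e1 : ⟪θ (m * j) v, θ m x⟫_ℂ = ⟪θ j v, x⟫_ℂ := by
      rw [unitary_inner_right θ hu, ← rep_mul_apply]
      congr 2
      group
    have e2 : σ ((m * j : ↥K) : G) u = σ (m : G) (σ (j : G) u) := by
      rw [Subgroup.coe_mul, rep_mul_apply]
    rw [e1, e2, map_smul]
  obtain ⟨c, hc⟩ := hL₁span A hAeq
  have hAv : A v = c • L₁ v := by rw [hc]; rfl
  have hwAv : ⟪L₁ v, A v⟫_ℂ = c := by rw [hAv, inner_smul_right, hww, mul_one]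
  have hstep : ∀ k : ↥K, ⟪L₁ v, σ (k : G) u⟫_ℂ = ⟪L₁ (θ k⁻¹ v), u⟫_ℂ := by
    intro k
    rw [unitary_inner_right σ huσ, hL₁equiv k⁻¹ v]
    simp
  have hq : (∑ k : ↥K, ⟪v, θ k v⟫_ℂ • θ k⁻¹ v)
      = ((Nat.card ↥K : ℂ) / (Module.finrank ℂ V : ℂ)) • v := by
    have := schur_avg θ hu hirr v v v
    rw [hvv, mul_one] at this
    rw [this, Nat.card_eq_fintype_card]
  have hlong : ⟪L₁ v, A v⟫_ℂ = ⟪L₁ (∑ k : ↥K, ⟪v, θ k v⟫_ℂ • θ k⁻¹ v), u⟫_ℂ := by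
    show ⟪L₁ v, ∑ k : ↥K, ⟪θ k v, v⟫_ℂ • σ (k : G) u⟫_ℂ = _
    rw [inner_sum, map_sum, sum_inner]
    refine Finset.sum_congr rfl fun k _ => ?_
    rw [inner_smul_right, hstep k, map_smul, inner_smul_left, inner_conj_symm]
  have hcval : c = ((Nat.card ↥K : ℂ) / (Module.finrank ℂ V : ℂ)) * ⟪L₁ v, u⟫_ℂ := by
    rw [← hwAv, hlong, hq, map_smul, inner_smul_left]
    congr 1
    rw [map_div₀, map_natCast, map_natCast]
  show A v = _
  rw [hAv, hcval]

end AuxiliaryLemmas3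

section AuxiliaryLemmas4

open scoped InnerProductSpace

lemma sum_reindex_right {M : Type} [AddCommMonoid M] (g : G) (F : G → M) :
    ∑ h : G, F h = ∑ j : G, F (g * j⁻¹) :=
  (Fintype.sum_equiv ((Equiv.inv G).trans (Equiv.mulLeft g)) (fun j => F (g * j⁻¹)) F
    (fun _ => rfl)).symm

lemma sum_G_to_K_vec {M : Type} [AddCommMonoid M] (K : Subgroup G) (F : G → M)
    (hF : ∀ g : G, g ∉ K → F g = 0) : ∑ g : G, F g = ∑ k : ↥K, F ↑k := by
  classical
  rw [← Finset.sum_filter_of_ne (s := Finset.univ) (p := fun g => g ∈ K)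
    (fun x _ hx => by by_contra hmem; exact hx (hF x hmem))]
  rw [Finset.sum_subtype (p := fun g => g ∈ K) (Finset.univ.filter (fun g => g ∈ K)) (by simp) F]

end AuxiliaryLemmas4

open scoped InnerProductSpace in
/-- For a multiplicity-free triple `(G,K,θ)` and an irreducible unitary
`G`-representation `σ` contained in `Ind_K^G θ`, the matrix coefficient
`φ^σ (g) = ⟨w^σ, σ(g) w^σ⟩`, `w^σ = L_σ v`, is a spherical function (and satisfies the
functional equation); and for two such representations `σ, ρ` the orthogonality relations
`⟨φ^σ, φ^ρ⟩ = (|G|/d_σ) δ_{σ,ρ}` hold. -/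
theorem statement11 (K : Subgroup G) (θ : ↥K →* (V ≃ₗ[ℂ] V))
    (hu : IsUnitaryRep θ) (hirr : IsIrreducibleRep θ) (v : V) (hv : ‖v‖ = 1)
    (hmf : IsMultFree K θ)
    (W₁ : Type) [NormedAddCommGroup W₁] [InnerProductSpace ℂ W₁] [FiniteDimensional ℂ W₁]
    (σ : G →* (W₁ ≃ₗ[ℂ] W₁)) (huσ : IsUnitaryRep σ) (hirrσ : IsIrreducibleRep σ)
    (hcontσ : homGInd K θ σ ≠ ⊥)
    (L₁ : V →ₗ[ℂ] W₁) (hL₁iso : ∀ x : V, ‖L₁ x‖ = ‖x‖)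
    (hL₁equiv : ∀ (k : K) (x : V), L₁ (θ k x) = σ (k : G) (L₁ x))
    (hL₁span : ∀ A : V →ₗ[ℂ] W₁, (∀ (k : K) (x : V), A (θ k x) = σ (k : G) (A x)) →
      ∃ c : ℂ, A = c • L₁)
    (W₂ : Type) [NormedAddCommGroup W₂] [InnerProductSpace ℂ W₂] [FiniteDimensional ℂ W₂]
    (ρ : G →* (W₂ ≃ₗ[ℂ] W₂)) (huρ : IsUnitaryRep ρ) (hirrρ : IsIrreducibleRep ρ)
    (hcontρ : homGInd K θ ρ ≠ ⊥)
    (L₂ : V →ₗ[ℂ] W₂) (hL₂iso : ∀ x : V, ‖L₂ x‖ = ‖x‖)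
    (hL₂equiv : ∀ (k : K) (x : V), L₂ (θ k x) = ρ (k : G) (L₂ x))
    (hL₂span : ∀ A : V →ₗ[ℂ] W₂, (∀ (k : K) (x : V), A (θ k x) = ρ (k : G) (A x)) →
      ∃ c : ℂ, A = c • L₂) :
    -- φ^σ is a spherical function of the triple (G,K,θ) ...
    IsSpherical K θ v (phiRep σ L₁ v) ∧
    -- ... and in particular satisfies the functional equation
    (∀ g h : G,
      (∑ k : K, phiRep σ L₁ v (g * (k : G) * h) * conj (psi K θ v (k : G))) =
        phiRep σ L₁ v g * phiRep σ L₁ v h) ∧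
    -- orthogonality relations
    (ReprEquiv σ ρ →
      innerC (phiRep σ L₁ v) (phiRep ρ L₂ v) =
        (Fintype.card G : ℂ) / (Module.finrank ℂ W₁ : ℂ)) ∧
    (¬ ReprEquiv σ ρ → innerC (phiRep σ L₁ v) (phiRep ρ L₂ v) = 0) := by
  classical
  have hVnt : Nontrivial V := nontrivial_of_irr hirr
  have hd0 : ((Module.finrank ℂ V : ℂ)) ≠ 0 :=
    Nat.cast_ne_zero.mpr (Module.finrank_pos (R := ℂ) (M := V)).ne'
  have hN0 : ((Nat.card ↥K : ℂ)) ≠ 0 :=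
    Nat.cast_ne_zero.mpr (Nat.card_pos (α := ↥K)).ne'
  have hvv : ⟪v, v⟫_ℂ = 1 := by
    rw [inner_self_eq_norm_sq_to_K, hv]; norm_num
  have hLinner : ∀ x y : V, ⟪L₁ x, L₁ y⟫_ℂ = ⟪x, y⟫_ℂ := fun x y =>
    LinearIsometry.inner_map_map (⟨L₁, hL₁iso⟩ : V →ₗᵢ[ℂ] W₁) x y
  have hww : ⟪L₁ v, L₁ v⟫_ℂ = 1 := by rw [hLinner, hvv]
  have hP : ∀ u : W₁, ∑ k : ↥K, ⟪θ k v, v⟫_ℂ • σ (k : G) u =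
      (((Nat.card ↥K : ℂ) / (Module.finrank ℂ V : ℂ)) * ⟪L₁ v, u⟫_ℂ) • L₁ v :=
    key_P K θ hu hirr v hv σ huσ L₁ hL₁iso hL₁equiv hL₁span
  have hq : (∑ k : ↥K, ⟪v, θ k v⟫_ℂ • θ k⁻¹ v)
      = ((Nat.card ↥K : ℂ) / (Module.finrank ℂ V : ℂ)) • v := by
    have h := schur_avg θ hu hirr v v v
    rw [hvv, mul_one] at h
    rw [h, Nat.card_eq_fintype_card]
  have hscal : ∀ x : V, ∑ k : ↥K, ⟪θ k v, v⟫_ℂ * ⟪θ k⁻¹ x, v⟫_ℂ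
      = ((Nat.card ↥K : ℂ) / (Module.finrank ℂ V : ℂ)) * ⟪x, v⟫_ℂ := by
    intro x
    have h := schur_avg θ hu hirr v x v
    have h2 := congrArg (fun z => ⟪z, v⟫_ℂ) h
    simp only [sum_inner, inner_smul_left] at h2
    calc ∑ k : ↥K, ⟪θ k v, v⟫_ℂ * ⟪θ k⁻¹ x, v⟫_ℂ
        = ∑ k : ↥K, (starRingEnd ℂ) ⟪v, θ k v⟫_ℂ * ⟪θ k⁻¹ x, v⟫_ℂ := by
          refine Finset.sum_congr rfl fun k _ => ?_
          rw [inner_conj_symm]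
      _ = (starRingEnd ℂ) ((Fintype.card ↥K : ℂ) * ⟪v, x⟫_ℂ / (Module.finrank ℂ V : ℂ)) *
            ⟪v, v⟫_ℂ := h2
      _ = ((Nat.card ↥K : ℂ) / (Module.finrank ℂ V : ℂ)) * ⟪x, v⟫_ℂ := by
          rw [hvv, mul_one, map_div₀, map_mul, map_natCast, map_natCast, inner_conj_symm,
            Nat.card_eq_fintype_card]
          ring
  -- φ at identity
  have hφ1 : phiRep σ L₁ v 1 = 1 := by
    show ⟪σ 1 (L₁ v), L₁ v⟫_ℂ = 1
    rw [map_one]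
    exact hww
  -- ψ * φ = φ
  have hψφ : convC (psi K θ v) (phiRep σ L₁ v) = phiRep σ L₁ v := by
    funext g
    show ∑ h : G, psi K θ v h * phiRep σ L₁ v (h⁻¹ * g) = phiRep σ L₁ v g
    rw [sum_G_to_K_vec K _ (fun h hh => by rw [psi_zero K θ v hh, zero_mul])]
    have hterm : ∀ k : ↥K, psi K θ v ↑k * phiRep σ L₁ v ((↑k : G)⁻¹ * g)
        = ((Module.finrank ℂ V : ℂ) / (Nat.card ↥K : ℂ)) *
          ⟪σ g (L₁ v), ⟪θ k v, v⟫_ℂ • σ (↑k : G) (L₁ v)⟫_ℂ := by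
      intro k
      rw [psi_coe]
      have e1 : phiRep σ L₁ v ((↑k : G)⁻¹ * g) = ⟪σ g (L₁ v), σ (↑k : G) (L₁ v)⟫_ℂ := by
        show ⟪σ ((↑k : G)⁻¹ * g) (L₁ v), L₁ v⟫_ℂ = _
        rw [rep_mul_apply, unitary_inner_left σ huσ, inv_inv]
      rw [e1, inner_smul_right]
      ring
    rw [Finset.sum_congr rfl (fun k _ => hterm k), ← Finset.mul_sum, ← inner_sum, hP (L₁ v),
      hww, mul_one, inner_smul_right]
    show _ = ⟪σ g (L₁ v), L₁ v⟫_ℂ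
    field_simp
  -- φ * ψ = φ
  have hφψ : convC (phiRep σ L₁ v) (psi K θ v) = phiRep σ L₁ v := by
    funext g
    show ∑ h : G, phiRep σ L₁ v h * psi K θ v (h⁻¹ * g) = phiRep σ L₁ v g
    rw [sum_reindex_right g (fun h => phiRep σ L₁ v h * psi K θ v (h⁻¹ * g))]
    have hj : ∀ j : G, (g * j⁻¹)⁻¹ * g = j := fun j => by group
    simp only [hj]
    rw [sum_G_to_K_vec K _ (fun j hj' => by rw [psi_zero K θ v hj', mul_zero])]
    have hterm : ∀ k : ↥K, phiRep σ L₁ v (g * (↑k : G)⁻¹) * psi K θ v ↑k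
        = ((Module.finrank ℂ V : ℂ) / (Nat.card ↥K : ℂ)) *
          ⟪σ g (L₁ (⟪v, θ k v⟫_ℂ • θ k⁻¹ v)), L₁ v⟫_ℂ := by
      intro k
      rw [psi_coe]
      have e1 : phiRep σ L₁ v (g * (↑k : G)⁻¹) = ⟪σ g (L₁ (θ k⁻¹ v)), L₁ v⟫_ℂ := by
        show ⟪σ (g * (↑k : G)⁻¹) (L₁ v), L₁ v⟫_ℂ = _
        rw [rep_mul_apply]
        congr 2
        rw [hL₁equiv k⁻¹ v]
        simp
      rw [e1, map_smul, map_smul, inner_smul_left, inner_conj_symm]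
      ring
    rw [Finset.sum_congr rfl (fun k _ => hterm k), ← Finset.mul_sum, ← sum_inner, ← map_sum,
      ← map_sum, hq, map_smul, map_smul, inner_smul_left]
    show _ = ⟪σ g (L₁ v), L₁ v⟫_ℂ
    rw [map_div₀, map_natCast, map_natCast]
    field_simp
  -- ψ * ψ = ψ
  have hψψ : convC (psi K θ v) (psi K θ v) = psi K θ v := by
    funext g
    show ∑ h : G, psi K θ v h * psi K θ v (h⁻¹ * g) = psi K θ v g
    rw [sum_G_to_K_vec K _ (fun h hh => by rw [psi_zero K θ v hh, zero_mul])]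
    by_cases hg : g ∈ K
    · have hterm : ∀ k : ↥K, psi K θ v ↑k * psi K θ v ((↑k : G)⁻¹ * g)
          = ((Module.finrank ℂ V : ℂ) / (Nat.card ↥K : ℂ))^2 *
            (⟪θ k v, v⟫_ℂ * ⟪θ k⁻¹ (θ ⟨g, hg⟩ v), v⟫_ℂ) := by
        intro k
        have hmem : (↑k : G)⁻¹ * g = ↑(k⁻¹ * (⟨g, hg⟩ : ↥K)) := by
          simp
        rw [hmem, psi_coe, psi_coe, rep_mul_apply]
        ring
      rw [Finset.sum_congr rfl (fun k _ => hterm k), ← Finset.mul_sum,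
        hscal (θ (⟨g, hg⟩ : ↥K) v)]
      have hg2 : psi K θ v g
          = ((Module.finrank ℂ V : ℂ) / (Nat.card ↥K : ℂ)) * ⟪θ (⟨g, hg⟩ : ↥K) v, v⟫_ℂ :=
        psi_coe K θ v ⟨g, hg⟩
      rw [hg2]
      field_simp
    · rw [psi_zero K θ v hg]
      refine Finset.sum_eq_zero fun k _ => ?_
      have hnot : (↑k : G)⁻¹ * g ∉ K := by
        intro hmem
        exact hg (by simpa using K.mul_mem k.2 hmem)
      rw [psi_zero K θ v hnot, mul_zero]
  -- functional equation
  have hfun : ∀ g h : G,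
      (∑ k : ↥K, phiRep σ L₁ v (g * (k : G) * h) * conj (psi K θ v (k : G))) =
        phiRep σ L₁ v g * phiRep σ L₁ v h := by
    intro g h
    have hterm : ∀ k : ↥K, phiRep σ L₁ v (g * (↑k : G) * h) * conj (psi K θ v ↑k)
        = ((Module.finrank ℂ V : ℂ) / (Nat.card ↥K : ℂ)) *
          ⟪σ g (⟪θ k v, v⟫_ℂ • σ (↑k : G) (σ h (L₁ v))), L₁ v⟫_ℂ := by
      intro k
      rw [psi_coe, map_mul, map_div₀, map_natCast, map_natCast]
      have e1 : phiRep σ L₁ v (g * (↑k : G) * h)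
          = ⟪σ g (σ (↑k : G) (σ h (L₁ v))), L₁ v⟫_ℂ := by
        show ⟪σ (g * (↑k : G) * h) (L₁ v), L₁ v⟫_ℂ = _
        rw [rep_mul_apply, rep_mul_apply]
      rw [e1, map_smul, inner_smul_left]
      ring
    rw [Finset.sum_congr rfl (fun k _ => hterm k), ← Finset.mul_sum, ← sum_inner, ← map_sum,
      hP (σ h (L₁ v)), map_smul, inner_smul_left]
    rw [map_mul, map_div₀, map_natCast, map_natCast, inner_conj_symm]
    show _ = ⟪σ g (L₁ v), L₁ v⟫_ℂ * ⟪σ h (L₁ v), L₁ v⟫_ℂ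
    field_simp
  -- eigenfunction property
  have heig : ∀ f ∈ HSet K θ v, ∃ c : ℂ, convC (phiRep σ L₁ v) f = c • phiRep σ L₁ v := by
    intro f hf
    have hf' : convC (convC (psi K θ v) f) (psi K θ v) = f := hf
    have hfψ : convC f (psi K θ v) = f := by
      conv_lhs => rw [← hf']
      rw [convC_assoc (convC (psi K θ v) f) (psi K θ v) (psi K θ v), hψψ, hf']
    set uf : W₁ := ∑ t : G, conj (f t) • σ t⁻¹ (L₁ v) with hufdef
    have hconv : ∀ g : G, convC (phiRep σ L₁ v) f g = ⟪σ g uf, L₁ v⟫_ℂ := by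
      intro g
      show ∑ h : G, phiRep σ L₁ v h * f (h⁻¹ * g) = _
      rw [sum_reindex_right g (fun h => phiRep σ L₁ v h * f (h⁻¹ * g))]
      have hj : ∀ j : G, (g * j⁻¹)⁻¹ * g = j := fun j => by group
      simp only [hj]
      have hterm : ∀ t : G, phiRep σ L₁ v (g * t⁻¹) * f t
          = ⟪σ g (conj (f t) • σ t⁻¹ (L₁ v)), L₁ v⟫_ℂ := by
        intro t
        have e1 : phiRep σ L₁ v (g * t⁻¹) = ⟪σ g (σ t⁻¹ (L₁ v)), L₁ v⟫_ℂ := by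
          show ⟪σ (g * t⁻¹) (L₁ v), L₁ v⟫_ℂ = _
          rw [rep_mul_apply]
        rw [e1, map_smul, inner_smul_left, Complex.conj_conj]
        ring
      rw [Finset.sum_congr rfl (fun t _ => hterm t), ← sum_inner, ← map_sum]
    have hft : ∀ t : G, f t = ∑ j : G, f (t * j⁻¹) * psi K θ v j := by
      intro t
      conv_lhs => rw [← hfψ]
      show ∑ h : G, f h * psi K θ v (h⁻¹ * t) = _
      rw [sum_reindex_right t (fun h => f h * psi K θ v (h⁻¹ * t))]
      have hj : ∀ j : G, (t * j⁻¹)⁻¹ * t = j := fun j => by group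
      simp only [hj]
    have h1 : uf = ∑ j : G, conj (psi K θ v j) • σ j⁻¹ uf := by
      calc uf = ∑ t : G, ∑ j : G, (conj (f (t * j⁻¹)) * conj (psi K θ v j)) • σ t⁻¹ (L₁ v) := by
            refine Finset.sum_congr rfl fun t _ => ?_
            rw [hft t, map_sum, Finset.sum_smul]
            refine Finset.sum_congr rfl fun j _ => ?_
            rw [map_mul]
        _ = ∑ j : G, ∑ t : G, (conj (f (t * j⁻¹)) * conj (psi K θ v j)) • σ t⁻¹ (L₁ v) :=
            Finset.sum_comm
        _ = ∑ j : G, conj (psi K θ v j) • σ j⁻¹ uf := by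
            refine Finset.sum_congr rfl fun j _ => ?_
            rw [hufdef, map_sum, Finset.smul_sum]
            refine (Fintype.sum_equiv (Equiv.mulRight j)
              (fun s => conj (psi K θ v j) • σ j⁻¹ (conj (f s) • σ s⁻¹ (L₁ v)))
              (fun t => (conj (f (t * j⁻¹)) * conj (psi K θ v j)) • σ t⁻¹ (L₁ v)) ?_).symm
            intro s
            show conj (psi K θ v j) • σ j⁻¹ (conj (f s) • σ s⁻¹ (L₁ v))
                = (conj (f (s * j * j⁻¹)) * conj (psi K θ v j)) • σ (s * j)⁻¹ (L₁ v)
            have e1 : s * j * j⁻¹ = s := by group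
            have e2 : (s * j)⁻¹ = j⁻¹ * s⁻¹ := by group
            rw [e1, e2, rep_mul_apply, map_smul, smul_smul]
            congr 1
            ring
    have h2 : uf = ⟪L₁ v, uf⟫_ℂ • L₁ v := by
      conv_lhs => rw [h1]
      rw [sum_G_to_K_vec K _ (fun j hj' => by rw [psi_zero K θ v hj', map_zero, zero_smul])]
      have hterm : ∀ k : ↥K, conj (psi K θ v ↑k) • σ (↑k : G)⁻¹ uf
          = (((Module.finrank ℂ V : ℂ) / (Nat.card ↥K : ℂ)) * ⟪θ k⁻¹ v, v⟫_ℂ) •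
              σ (↑k : G)⁻¹ uf := by
        intro k
        rw [psi_coe, map_mul, map_div₀, map_natCast, map_natCast, inner_conj_symm,
          unitary_inner_right θ hu]
      rw [Finset.sum_congr rfl (fun k _ => hterm k)]
      have hre : ∑ k : ↥K, (((Module.finrank ℂ V : ℂ) / (Nat.card ↥K : ℂ)) *
            ⟪θ k⁻¹ v, v⟫_ℂ) • σ (↑k : G)⁻¹ uf
          = ∑ j : ↥K, (((Module.finrank ℂ V : ℂ) / (Nat.card ↥K : ℂ)) *
            ⟪θ j v, v⟫_ℂ) • σ (↑j : G) uf := by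
        refine (Fintype.sum_equiv (Equiv.inv ↥K)
          (fun j => (((Module.finrank ℂ V : ℂ) / (Nat.card ↥K : ℂ)) *
            ⟪θ j v, v⟫_ℂ) • σ (↑j : G) uf)
          (fun k => (((Module.finrank ℂ V : ℂ) / (Nat.card ↥K : ℂ)) *
            ⟪θ k⁻¹ v, v⟫_ℂ) • σ (↑k : G)⁻¹ uf) ?_).symm
        intro j
        simp
      rw [hre]
      have hsplit : ∑ j : ↥K, (((Module.finrank ℂ V : ℂ) / (Nat.card ↥K : ℂ)) *
            ⟪θ j v, v⟫_ℂ) • σ (↑j : G) uf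
          = ((Module.finrank ℂ V : ℂ) / (Nat.card ↥K : ℂ)) •
              ∑ j : ↥K, ⟪θ j v, v⟫_ℂ • σ (↑j : G) uf := by
        rw [Finset.smul_sum]
        refine Finset.sum_congr rfl fun j _ => ?_
        rw [smul_smul]
      rw [hsplit, hP uf, smul_smul]
      congr 1
      field_simp
    refine ⟨conj ⟪L₁ v, uf⟫_ℂ, ?_⟩
    funext g
    show convC (phiRep σ L₁ v) f g = conj ⟪L₁ v, uf⟫_ℂ * phiRep σ L₁ v g
    rw [hconv g]
    conv_lhs => rw [h2]
    rw [map_smul, inner_smul_left]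
    rfl
  -- equivalent case
  have hequivcase : ReprEquiv σ ρ →
      innerC (phiRep σ L₁ v) (phiRep ρ L₂ v) =
        (Fintype.card G : ℂ) / (Module.finrank ℂ W₁ : ℂ) := by
    intro hequiv
    obtain ⟨e, he⟩ := hequiv
    set T : W₁ →ₗ[ℂ] W₁ :=
      (LinearMap.adjoint (e.toLinearMap : W₁ →ₗ[ℂ] W₂)) ∘ₗ (e.toLinearMap : W₁ →ₗ[ℂ] W₂)
      with hTdef
    have l1 : ∀ z y : W₁, ⟪T z, y⟫_ℂ = ⟪e z, e y⟫_ℂ := by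
      intro z y
      show ⟪LinearMap.adjoint e.toLinearMap (e.toLinearMap z), y⟫_ℂ = _
      rw [LinearMap.adjoint_inner_left]
      rfl
    have l2 : ∀ z y : W₁, ⟪z, T y⟫_ℂ = ⟪e z, e y⟫_ℂ := by
      intro z y
      show ⟪z, LinearMap.adjoint e.toLinearMap (e.toLinearMap y)⟫_ℂ = _
      rw [LinearMap.adjoint_inner_right]
      rfl
    have hT : ∀ (g : G) (x : W₁), T (σ g x) = σ g (T x) := by
      intro g x
      refine ext_inner_right ℂ fun y => ?_
      calc ⟪T (σ g x), y⟫_ℂ = ⟪e (σ g x), e y⟫_ℂ := l1 _ _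
        _ = ⟪ρ g (e x), e y⟫_ℂ := by rw [he]
        _ = ⟪e x, ρ g⁻¹ (e y)⟫_ℂ := unitary_inner_left ρ huρ g _ _
        _ = ⟪e x, e (σ g⁻¹ y)⟫_ℂ := by rw [he]
        _ = ⟪T x, σ g⁻¹ y⟫_ℂ := (l1 _ _).symm
        _ = ⟪σ g (T x), y⟫_ℂ := (unitary_inner_left σ huσ g _ _).symm
    obtain ⟨lam, hlam⟩ := schur_scalar σ hirrσ T hT
    have hlamval : lam = ((‖e (L₁ v)‖ : ℝ) : ℂ)^2 := by
      have h1 : ⟪L₁ v, T (L₁ v)⟫_ℂ = lam := by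
        rw [hlam, inner_smul_right, hww, mul_one]
      rw [← h1, l2, inner_self_eq_norm_sq_to_K]
      norm_cast
    have hwne : L₁ v ≠ 0 := by
      intro h0
      rw [h0, inner_zero_left] at hww
      exact zero_ne_one hww
    have hewne : ‖e (L₁ v)‖ ≠ 0 := by
      rw [norm_ne_zero_iff]
      intro h0
      apply hwne
      have := congrArg e.symm h0
      simpa using this
    have hrC : ((‖e (L₁ v)‖ : ℝ) : ℂ) ≠ 0 := by
      exact_mod_cast Complex.ofReal_ne_zero.mpr hewne
    set E : W₁ →ₗ[ℂ] W₂ := (((‖e (L₁ v)‖ : ℝ) : ℂ)⁻¹) • e.toLinearMap with hEdef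
    have hee : ∀ x y : W₁, ⟪e x, e y⟫_ℂ = ((‖e (L₁ v)‖ : ℝ) : ℂ)^2 * ⟪x, y⟫_ℂ := by
      intro x y
      rw [← l2, hlam, inner_smul_right, hlamval]
    have hEinner : ∀ x y : W₁, ⟪E x, E y⟫_ℂ = ⟪x, y⟫_ℂ := by
      intro x y
      show ⟪((‖e (L₁ v)‖ : ℝ) : ℂ)⁻¹ • e x, ((‖e (L₁ v)‖ : ℝ) : ℂ)⁻¹ • e y⟫_ℂ = _
      rw [inner_smul_left, inner_smul_right, hee, map_inv₀, Complex.conj_ofReal]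
      field_simp
    have hEequiv : ∀ (g : G) (x : W₁), E (σ g x) = ρ g (E x) := by
      intro g x
      show ((‖e (L₁ v)‖ : ℝ) : ℂ)⁻¹ • e (σ g x) = ρ g (((‖e (L₁ v)‖ : ℝ) : ℂ)⁻¹ • e x)
      rw [he, map_smul]
    have hA2 : ∀ (k : ↥K) (x : V), (E ∘ₗ L₁) (θ k x) = ρ (k : G) ((E ∘ₗ L₁) x) := by
      intro k x
      show E (L₁ (θ k x)) = ρ (k : G) (E (L₁ x))
      rw [hL₁equiv, hEequiv]
    obtain ⟨c, hc⟩ := hL₂span (E ∘ₗ L₁) hA2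
    have hcw : E (L₁ v) = c • L₂ v := by
      have := congrArg (fun (A : V →ₗ[ℂ] W₂) => A v) hc
      simpa using this
    have hL2vv : ⟪L₂ v, L₂ v⟫_ℂ = 1 := by
      rw [inner_self_eq_norm_sq_to_K, hL₂iso, hv]; norm_num
    have hcc : conj c * c = 1 := by
      have h1 : ⟪E (L₁ v), E (L₁ v)⟫_ℂ = 1 := by rw [hEinner, hww]
      rw [hcw, inner_smul_left, inner_smul_right, hL2vv, mul_one] at h1
      exact h1
    have hphieq : ∀ g : G, phiRep σ L₁ v g = phiRep ρ L₂ v g := by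
      intro g
      show ⟪σ g (L₁ v), L₁ v⟫_ℂ = ⟪ρ g (L₂ v), L₂ v⟫_ℂ
      rw [← hEinner (σ g (L₁ v)) (L₁ v), hEequiv, hcw, map_smul, inner_smul_left,
        inner_smul_right, ← mul_assoc, hcc, one_mul]
    show ∑ g : G, phiRep σ L₁ v g * conj (phiRep ρ L₂ v g) = _
    have hred : ∑ g : G, phiRep σ L₁ v g * conj (phiRep ρ L₂ v g)
        = ∑ g : G, phiRep σ L₁ v g * conj (phiRep σ L₁ v g) := by
      refine Finset.sum_congr rfl fun g _ => ?_
      rw [hphieq g]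
    rw [hred]
    have h3 := schur_avg σ huσ hirrσ (L₁ v) (L₁ v) (L₁ v)
    rw [hww, mul_one] at h3
    have h4 := congrArg (fun z => ⟪z, L₁ v⟫_ℂ) h3
    simp only [sum_inner, inner_smul_left] at h4
    have h5 : ∀ g : G, (starRingEnd ℂ) ⟪L₁ v, σ g (L₁ v)⟫_ℂ * ⟪σ g⁻¹ (L₁ v), L₁ v⟫_ℂ
        = phiRep σ L₁ v g * conj (phiRep σ L₁ v g) := by
      intro g
      have e1 : (starRingEnd ℂ) ⟪L₁ v, σ g (L₁ v)⟫_ℂ = phiRep σ L₁ v g := by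
        rw [inner_conj_symm]; rfl
      have e2 : ⟪σ g⁻¹ (L₁ v), L₁ v⟫_ℂ = conj (phiRep σ L₁ v g) := by
        rw [unitary_inner_left σ huσ, inv_inv, ← inner_conj_symm]
        rfl
      rw [e1, e2]
    rw [← Finset.sum_congr rfl (fun g _ => h5 g), h4, hww, mul_one, map_div₀, map_natCast,
      map_natCast]
  -- non-equivalent case
  have hnecase : ¬ ReprEquiv σ ρ → innerC (phiRep σ L₁ v) (phiRep ρ L₂ v) = 0 := by
    intro hne
    show ∑ g : G, phiRep σ L₁ v g * conj (phiRep ρ L₂ v g) = 0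
    have h0 := cross_avg σ ρ hirrσ hirrρ hne (L₁ v) (L₁ v) (L₂ v)
    have h1 := congrArg (fun z => ⟪L₂ v, z⟫_ℂ) h0
    simp only [inner_sum, inner_smul_right, inner_zero_right] at h1
    rw [← h1]
    refine Finset.sum_congr rfl fun g _ => ?_
    have e1 : phiRep σ L₁ v g = ⟪L₁ v, σ g⁻¹ (L₁ v)⟫_ℂ := by
      show ⟪σ g (L₁ v), L₁ v⟫_ℂ = _
      rw [unitary_inner_left σ huσ]
    have e2 : conj (phiRep ρ L₂ v g) = ⟪L₂ v, ρ g (L₂ v)⟫_ℂ := by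
      show (starRingEnd ℂ) ⟪ρ g (L₂ v), L₂ v⟫_ℂ = _
      rw [inner_conj_symm]
    rw [e1, e2]
  refine ⟨⟨?_, hφ1, heig⟩, hfun, hequivcase, hnecase⟩
  show convC (convC (psi K θ v) (phiRep σ L₁ v)) (psi K θ v) = phiRep σ L₁ v
  rw [hψφ, hφψ]


end MFT
end
end

section
/- Let N be a normal subgroup of the finite group G and (θ,V) an irreducible unitary representation of N. Then dim_ℂ End_G(Ind_N^G V) = [I_G(θ) : N], the index of N in the inertia group of θ. -/
open scoped BigOperators ComplexConjugate Classical

set_option linter.unusedSectionVars false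
set_option synthInstance.maxHeartbeats 1000000
set_option maxHeartbeats 1000000

noncomputable section

namespace MFT

variable {G : Type} [Group G] [Fintype G]
variable {V : Type} [NormedAddCommGroup V] [InnerProductSpace ℂ V] [FiniteDimensional ℂ V]

variable (K : Subgroup G) (θ : ↥K →* (V ≃ₗ[ℂ] V))

/-- `I` is the inertia group `I_G(θ) = {g ∈ G : {}^g θ ∼ θ}` of the representation `θ` of the
normal subgroup `N`, where `{}^g θ (n) = θ (g⁻¹ n g)`. -/
def IsInertia (N : Subgroup G) (θ : ↥N →* (V ≃ₗ[ℂ] V)) (I : Subgroup G) : Prop :=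
  ∀ g : G, g ∈ I ↔
    ∃ T : V ≃ₗ[ℂ] V, ∀ (n m : G) (hn : n ∈ N) (hm : m ∈ N), m = g⁻¹ * n * g →
      T.toLinearMap ∘ₗ (θ ⟨n, hn⟩).toLinearMap = (θ ⟨m, hm⟩).toLinearMap ∘ₗ T.toLinearMap

section Statement14Aux

variable (N : Subgroup G) (θ : ↥N →* (V ≃ₗ[ℂ] V))

lemma thetaL_mul (a b : ↥N) :
    (θ (a * b)).toLinearMap = (θ a).toLinearMap ∘ₗ (θ b).toLinearMap := by
  rw [map_mul]; rfl

lemma theta_comp_inv (a : ↥N) :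
    (θ a).toLinearMap ∘ₗ (θ a⁻¹).toLinearMap = LinearMap.id := by
  rw [← thetaL_mul, mul_inv_cancel, map_one]; rfl

lemma theta_inv_comp (a : ↥N) :
    (θ a⁻¹).toLinearMap ∘ₗ (θ a).toLinearMap = LinearMap.id := by
  rw [← thetaL_mul, inv_mul_cancel, map_one]; rfl

lemma theta_cancel₁ (a : ↥N) (X : V →ₗ[ℂ] V) :
    (θ a).toLinearMap ∘ₗ ((θ a⁻¹).toLinearMap ∘ₗ X) = X := by
  rw [← LinearMap.comp_assoc, theta_comp_inv, LinearMap.id_comp]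

lemma theta_cancel₂ (a : ↥N) (X : V →ₗ[ℂ] V) :
    (θ a⁻¹).toLinearMap ∘ₗ ((θ a).toLinearMap ∘ₗ X) = X := by
  rw [← LinearMap.comp_assoc, theta_inv_comp, LinearMap.id_comp]

lemma theta_apply_inv_apply (a : ↥N) (v : V) : θ a (θ a⁻¹ v) = v := by
  have h : (θ a).toLinearMap ∘ₗ (θ a⁻¹).toLinearMap = LinearMap.id := theta_comp_inv N θ a
  simpa using LinearMap.congr_fun h v

lemma theta_inv_apply_apply (a : ↥N) (v : V) : θ a⁻¹ (θ a v) = v := by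
  have h : (θ a⁻¹).toLinearMap ∘ₗ (θ a).toLinearMap = LinearMap.id := theta_inv_comp N θ a
  simpa using LinearMap.congr_fun h v
/-- The function `δ_v : G → V`, equal to `θ(x⁻¹) v` on `N` and `0` elsewhere. -/
def delta (v : V) : G → V := fun x => if hx : x ∈ N then θ (⟨x, hx⟩ : ↥N)⁻¹ v else 0

lemma delta_mem_ind (v : V) : delta N θ v ∈ ind N θ := by
  intro g k
  by_cases hg : g ∈ N
  · have hgk : g * (k : G) ∈ N := N.mul_mem hg k.2
    have h1 : (⟨g * (k : G), hgk⟩ : ↥N) = ⟨g, hg⟩ * k := rfl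
    simp only [delta, dif_pos hg, dif_pos hgk, h1, mul_inv_rev, map_mul]
    rfl
  · have hgk : g * (k : G) ∉ N := by
      intro h
      exact hg (by simpa using N.mul_mem h (N.inv_mem k.2))
    simp only [delta, dif_neg hg, dif_neg hgk, map_zero]

/-- `delta` as a linear map into the induced space. -/
def deltaL : V →ₗ[ℂ] ↥(ind N θ) where
  toFun v := ⟨delta N θ v, delta_mem_ind N θ v⟩
  map_add' v w := by
    apply Subtype.ext; funext x
    by_cases hx : x ∈ N <;> simp [delta, hx]
  map_smul' c v := by
    apply Subtype.ext; funext x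
    by_cases hx : x ∈ N <;> simp [delta, hx]

lemma translate_delta (k : ↥N) (v : V) :
    translate ((k : G)⁻¹) (delta N θ v) = delta N θ (θ k⁻¹ v) := by
  funext x
  simp only [translate, inv_inv]
  by_cases hx : x ∈ N
  · have hkx : (k : G) * x ∈ N := N.mul_mem k.2 hx
    have h1 : (⟨(k : G) * x, hkx⟩ : ↥N) = k * ⟨x, hx⟩ := rfl
    simp only [delta, dif_pos hx, dif_pos hkx, h1, mul_inv_rev, map_mul]
    rfl
  · have hkx : (k : G) * x ∉ N := fun h => hx (by simpa using N.mul_mem (N.inv_mem k.2) h)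
    simp only [delta, dif_neg hx, dif_neg hkx]

/-- The Hecke algebra as a submodule of `G → End V`. -/
def heckeM : Submodule ℂ (G → (V →ₗ[ℂ] V)) where
  carrier := {F | IsHecke N θ F}
  add_mem' := by
    intro a b ha hb g k₁ k₂
    simp only [Pi.add_apply, ha g k₁ k₂, hb g k₁ k₂, LinearMap.add_comp, LinearMap.comp_add]
  zero_mem' := by
    intro g k₁ k₂
    simp only [Pi.zero_apply, LinearMap.zero_comp, LinearMap.comp_zero]
  smul_mem' := by
    intro c a ha g k₁ k₂
    simp only [Pi.smul_apply, ha g k₁ k₂, LinearMap.smul_comp, LinearMap.comp_smul]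

lemma xiFun_mem_ind {F : G → (V →ₗ[ℂ] V)} (hF : IsHecke N θ F) {f : G → V}
    (hf : f ∈ ind N θ) : xiFun F f ∈ ind N θ := by
  intro g k
  show ∑ h : G, F (h⁻¹ * (g * (k : G))) (f h) = θ k⁻¹ (∑ h : G, F (h⁻¹ * g) (f h))
  rw [map_sum]
  refine Finset.sum_congr rfl fun h _ => ?_
  have h2 := hF (h⁻¹ * g) 1 k
  simp only [OneMemClass.coe_one, one_mul, inv_one, map_one,
    LinearEquiv.coe_toLinearMap_one, LinearMap.comp_id] at h2
  rw [← mul_assoc, h2]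
  rfl
/-- `ξ F` as an endomorphism of the induced space. -/
def xiInd {F : G → (V →ₗ[ℂ] V)} (hF : IsHecke N θ F) : ↥(ind N θ) →ₗ[ℂ] ↥(ind N θ) where
  toFun f := ⟨xiFun F (f : G → V), xiFun_mem_ind N θ hF f.2⟩
  map_add' f₁ f₂ := by
    apply Subtype.ext; funext g
    simp [xiFun, Finset.sum_add_distrib]
  map_smul' c f := by
    apply Subtype.ext; funext g
    simp [xiFun, Finset.smul_sum]

lemma xiInd_mem_commutant {F : G → (V →ₗ[ℂ] V)} (hF : IsHecke N θ F) :
    xiInd N θ hF ∈ commutant N θ := by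
  intro h f
  apply Subtype.ext
  funext g
  show xiFun F (translate h (f : G → V)) g = translate h (xiFun F (f : G → V)) g
  simp only [xiFun, translate]
  rw [← Equiv.sum_comp (Equiv.mulLeft h) (fun x => F (x⁻¹ * g) ((f : G → V) (h⁻¹ * x)))]
  refine Finset.sum_congr rfl fun x _ => ?_
  simp [Equiv.coe_mulLeft, mul_inv_rev, mul_assoc]

/-- The isomorphism from the Hecke algebra onto the commutant. -/
def Psi : ↥(heckeM N θ) →ₗ[ℂ] ↥(commutant N θ) where
  toFun F := ⟨xiInd N θ (F.2 : IsHecke N θ (F : G → (V →ₗ[ℂ] V))), xiInd_mem_commutant N θ _⟩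
  map_add' F₁ F₂ := by
    apply Subtype.ext
    apply LinearMap.ext; intro f
    apply Subtype.ext
    funext g
    show xiFun ((F₁ : G → (V →ₗ[ℂ] V)) + (F₂ : G → (V →ₗ[ℂ] V))) (f : G → V) g = _
    simp [xiFun, Finset.sum_add_distrib]
    rfl
  map_smul' c F := by
    apply Subtype.ext
    apply LinearMap.ext; intro f
    apply Subtype.ext
    funext g
    show xiFun (c • (F : G → (V →ₗ[ℂ] V))) (f : G → V) g
        = c • xiFun (F : G → (V →ₗ[ℂ] V)) (f : G → V) g
    simp [xiFun, Finset.smul_sum]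

lemma xiFun_delta {F : G → (V →ₗ[ℂ] V)} (hF : IsHecke N θ F) (v : V) (g : G) :
    xiFun F (delta N θ v) g = (Fintype.card ↥N : ℂ) • F g v := by
  have key : ∀ h : G, F (h⁻¹ * g) (delta N θ v h) = if h ∈ N then F g v else 0 := by
    intro h
    by_cases hh : h ∈ N
    · simp only [delta, dif_pos hh, if_pos hh]
      have h2 := hF g (⟨h, hh⟩ : ↥N)⁻¹ 1
      simp only [OneMemClass.coe_one, mul_one, inv_one, map_one, inv_inv,
        LinearEquiv.coe_toLinearMap_one, LinearMap.id_comp, InvMemClass.coe_inv] at h2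
      rw [h2]
      show F g (θ (⟨h, hh⟩ : ↥N) (θ (⟨h, hh⟩ : ↥N)⁻¹ v)) = F g v
      rw [theta_apply_inv_apply]
    · have : delta N θ v h = 0 := by simp [delta, dif_neg hh]
      simp [this, if_neg hh]
  show ∑ h : G, F (h⁻¹ * g) (delta N θ v h) = _
  rw [Finset.sum_congr rfl fun h _ => key h, ← Finset.sum_filter, Finset.sum_const,
    Nat.cast_smul_eq_nsmul]
  congr 1
  simp [Fintype.card_subtype]

lemma card_N_ne_zero : (Fintype.card ↥N : ℂ) ≠ 0 :=
  Nat.cast_ne_zero.mpr Fintype.card_ne_zero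

lemma Psi_injective : Function.Injective (Psi N θ) := by
  rw [injective_iff_map_eq_zero]
  intro F hF0
  apply Subtype.ext
  funext g
  apply LinearMap.ext; intro v
  have h0 : xiInd N θ (F.2 : IsHecke N θ (F : G → (V →ₗ[ℂ] V))) = 0 :=
    congrArg Subtype.val hF0
  have h1 : xiFun (F : G → (V →ₗ[ℂ] V)) (delta N θ v) g = 0 := by
    have := congrArg (fun (T : ↥(ind N θ) →ₗ[ℂ] ↥(ind N θ)) =>
      ((T (deltaL N θ v) : ↥(ind N θ)) : G → V) g) h0
    exact this.trans (by simp)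
  rw [xiFun_delta N θ F.2] at h1
  have := smul_eq_zero.mp h1
  rcases this with h | h
  · exact absurd h (card_N_ne_zero N)
  · simpa using h
/-- Recover a Hecke function from an element of the commutant. -/
def FofT (T : ↥(ind N θ) →ₗ[ℂ] ↥(ind N θ)) : G → (V →ₗ[ℂ] V) := fun g =>
  (Fintype.card ↥N : ℂ)⁻¹ • (LinearMap.proj g ∘ₗ (ind N θ).subtype ∘ₗ T ∘ₗ deltaL N θ)

lemma FofT_apply (T : ↥(ind N θ) →ₗ[ℂ] ↥(ind N θ)) (g : G) (v : V) :
    FofT N θ T g v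
      = (Fintype.card ↥N : ℂ)⁻¹ • ((T (deltaL N θ v) : ↥(ind N θ)) : G → V) g := rfl

lemma commutant_translate {T : ↥(ind N θ) →ₗ[ℂ] ↥(ind N θ)} (hT : T ∈ commutant N θ)
    (h : G) (f : ↥(ind N θ)) (g : G) :
    ((T f : ↥(ind N θ)) : G → V) (h⁻¹ * g)
      = ((T (lamL N θ h f) : ↥(ind N θ)) : G → V) g := by
  rw [hT h f]; rfl

lemma lamL_deltaL (k : ↥N) (v : V) :
    lamL N θ ((k : G)⁻¹) (deltaL N θ v) = deltaL N θ (θ k⁻¹ v) :=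
  Subtype.ext (translate_delta N θ k v)

lemma FofT_isHecke {T : ↥(ind N θ) →ₗ[ℂ] ↥(ind N θ)} (hT : T ∈ commutant N θ) :
    IsHecke N θ (FofT N θ T) := by
  intro g k₁ k₂
  apply LinearMap.ext; intro v
  have htrans : ((T (deltaL N θ v) : ↥(ind N θ)) : G → V) ((k₁ : G) * g)
      = ((T (deltaL N θ (θ k₁⁻¹ v)) : ↥(ind N θ)) : G → V) g := by
    have h1 : (k₁ : G) * g = ((k₁ : G)⁻¹)⁻¹ * g := by rw [inv_inv]
    rw [h1, commutant_translate N θ hT, lamL_deltaL]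
  have hind := (T (deltaL N θ v)).2 ((k₁ : G) * g) k₂
  show FofT N θ T ((k₁ : G) * g * (k₂ : G)) v = θ k₂⁻¹ (FofT N θ T g (θ k₁⁻¹ v))
  rw [FofT_apply, FofT_apply, hind, htrans, map_smul]

lemma sum_lamL_deltaL (f : ↥(ind N θ)) :
    ∑ h : G, lamL N θ h (deltaL N θ ((f : G → V) h)) = (Fintype.card ↥N : ℂ) • f := by
  apply Subtype.ext
  rw [Submodule.coe_sum, Submodule.coe_smul]
  funext g
  have key : ∀ n : G, ((lamL N θ (g * n⁻¹) (deltaL N θ ((f : G → V) (g * n⁻¹))) : ↥(ind N θ))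
      : G → V) g = if n ∈ N then (f : G → V) g else 0 := by
    intro n
    show delta N θ ((f : G → V) (g * n⁻¹)) ((g * n⁻¹)⁻¹ * g) = _
    have h1 : (g * n⁻¹)⁻¹ * g = n := by group
    rw [h1]
    by_cases hn : n ∈ N
    · simp only [delta, dif_pos hn, if_pos hn]
      have h2 := f.2 g (⟨n, hn⟩ : ↥N)⁻¹
      simp only [InvMemClass.coe_inv, inv_inv] at h2
      rw [h2, theta_inv_apply_apply]
    · simp only [delta, dif_neg hn, if_neg hn]
  have hsum : ∑ n : G, (if n ∈ N then (f : G → V) g else 0)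
      = ∑ h : G, ((lamL N θ h (deltaL N θ ((f : G → V) h)) : ↥(ind N θ)) : G → V) g :=
    Fintype.sum_bijective (fun n => g * n⁻¹)
      (((Equiv.inv G).trans (Equiv.mulLeft g)).bijective) _ _ (fun n => (key n).symm)
  rw [Finset.sum_apply, ← hsum, ← Finset.sum_filter, Finset.sum_const, Pi.smul_apply,
    Nat.cast_smul_eq_nsmul]
  congr 1
  simp [Fintype.card_subtype]

lemma Psi_surjective : Function.Surjective (Psi N θ) := by
  rintro ⟨T, hT⟩
  refine ⟨⟨FofT N θ T, FofT_isHecke N θ hT⟩, ?_⟩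
  apply Subtype.ext
  apply LinearMap.ext; intro f
  apply Subtype.ext
  funext g
  show ∑ h : G, FofT N θ T (h⁻¹ * g) ((f : G → V) h) = ((T f : ↥(ind N θ)) : G → V) g
  have step1 : ∀ h : G, FofT N θ T (h⁻¹ * g) ((f : G → V) h)
      = (Fintype.card ↥N : ℂ)⁻¹
        • ((T (lamL N θ h (deltaL N θ ((f : G → V) h))) : ↥(ind N θ)) : G → V) g := by
    intro h
    rw [FofT_apply, commutant_translate N θ hT h]
  rw [Finset.sum_congr rfl fun h _ => step1 h, ← Finset.smul_sum]
  have step2 : (∑ h : G, ((T (lamL N θ h (deltaL N θ ((f : G → V) h))) : ↥(ind N θ)) : G → V) g)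
      = ((T (∑ h : G, lamL N θ h (deltaL N θ ((f : G → V) h))) : ↥(ind N θ)) : G → V) g := by
    rw [map_sum, Submodule.coe_sum, Finset.sum_apply]
  rw [step2, sum_lamL_deltaL, map_smul]
  show (Fintype.card ↥N : ℂ)⁻¹ • ((Fintype.card ↥N : ℂ) • ((T f : ↥(ind N θ)) : G → V)) g = _
  rw [Pi.smul_apply, smul_smul, inv_mul_cancel₀ (card_N_ne_zero N)]
  simp
lemma key_mem (g : G) : (Quotient.out (QuotientGroup.mk g : G ⧸ N))⁻¹ * g ∈ N :=
  QuotientGroup.eq.mp (QuotientGroup.out_eq' (QuotientGroup.mk g : G ⧸ N))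

lemma hecke_eq_of_rep {F : G → (V →ₗ[ℂ] V)} (hF : IsHecke N θ F) (s : G) (k : ↥N) :
    F (s * (k : G)) = (θ k⁻¹).toLinearMap ∘ₗ F s := by
  have h := hF s 1 k
  simpa using h

lemma hecke_mem_interSpace {F : G → (V →ₗ[ℂ] V)} (hF : IsHecke N θ F) (s : G) :
    F s ∈ interSpace N θ s := by
  intro x hx hx'
  have h1 := hF s ⟨x, hx⟩ 1
  simp only [OneMemClass.coe_one, mul_one, inv_one, map_one,
    LinearEquiv.coe_toLinearMap_one, LinearMap.id_comp] at h1
  have h2 := hF s 1 ⟨s⁻¹ * x * s, hx'⟩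
  simp only [OneMemClass.coe_one, one_mul, inv_one, map_one,
    LinearEquiv.coe_toLinearMap_one, LinearMap.comp_id] at h2
  have h3 : s * (s⁻¹ * x * s) = x * s := by group
  rw [h3, h1] at h2
  -- h2 : F s ∘ₗ θ⟨x⟩⁻¹ = θ⟨m⟩⁻¹ ∘ₗ F s
  have h4 := congrArg (fun A => (θ (⟨s⁻¹ * x * s, hx'⟩ : ↥N)).toLinearMap
    ∘ₗ (A ∘ₗ (θ (⟨x, hx⟩ : ↥N)).toLinearMap)) h2
  simpa only [LinearMap.comp_assoc, theta_inv_comp, theta_comp_inv, theta_cancel₁,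
    theta_cancel₂, LinearMap.comp_id, LinearMap.id_comp] using h4.symm

/-- The decomposition of the Hecke algebra along cosets. -/
def Phi : ↥(heckeM N θ) →ₗ[ℂ] ((c : G ⧸ N) → ↥(interSpace N θ (Quotient.out c))) where
  toFun F c := ⟨(F : G → (V →ₗ[ℂ] V)) (Quotient.out c),
    hecke_mem_interSpace N θ (F.2 : IsHecke N θ (F : G → (V →ₗ[ℂ] V))) (Quotient.out c)⟩
  map_add' F₁ F₂ := by funext c; apply Subtype.ext; simp
  map_smul' c F := by funext x; apply Subtype.ext; simp

lemma hecke_decomp {F : G → (V →ₗ[ℂ] V)} (hF : IsHecke N θ F) (g : G) :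
    F g = (θ (⟨(Quotient.out (QuotientGroup.mk g : G ⧸ N))⁻¹ * g, key_mem N g⟩ : ↥N)⁻¹).toLinearMap
      ∘ₗ F (Quotient.out (QuotientGroup.mk g : G ⧸ N)) := by
  conv_lhs => rw [show g = Quotient.out (QuotientGroup.mk g : G ⧸ N)
    * ((Quotient.out (QuotientGroup.mk g : G ⧸ N))⁻¹ * g) by rw [mul_inv_cancel_left]]
  exact hecke_eq_of_rep N θ hF _ ⟨_, key_mem N g⟩

lemma Phi_injective : Function.Injective (Phi N θ) := by
  intro F₁ F₂ h
  apply Subtype.ext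
  funext g
  have hc : (F₁ : G → (V →ₗ[ℂ] V)) (Quotient.out (QuotientGroup.mk g : G ⧸ N))
      = (F₂ : G → (V →ₗ[ℂ] V)) (Quotient.out (QuotientGroup.mk g : G ⧸ N)) :=
    congrArg Subtype.val (congrFun h (QuotientGroup.mk g))
  rw [hecke_decomp N θ F₁.2 g, hecke_decomp N θ F₂.2 g, hc]

/-- Assembling a Hecke function from intertwiners at coset representatives. -/
def Fu (u : (c : G ⧸ N) → ↥(interSpace N θ (Quotient.out c))) : G → (V →ₗ[ℂ] V) := fun g =>
  (θ (⟨(Quotient.out (QuotientGroup.mk g : G ⧸ N))⁻¹ * g, key_mem N g⟩ : ↥N)⁻¹).toLinearMap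
    ∘ₗ (u (QuotientGroup.mk g) : V →ₗ[ℂ] V)

lemma Fu_spec (u : (c : G ⧸ N) → ↥(interSpace N θ (Quotient.out c))) (g : G) (c : G ⧸ N)
    (h : (QuotientGroup.mk g : G ⧸ N) = c) (hk : (Quotient.out c)⁻¹ * g ∈ N) :
    Fu N θ u g = (θ (⟨(Quotient.out c)⁻¹ * g, hk⟩ : ↥N)⁻¹).toLinearMap
      ∘ₗ (u c : V →ₗ[ℂ] V) := by
  subst h; rfl

lemma Fu_out (u : (c : G ⧸ N) → ↥(interSpace N θ (Quotient.out c))) (c : G ⧸ N) :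
    Fu N θ u (Quotient.out c) = (u c : V →ₗ[ℂ] V) := by
  have hk : (Quotient.out c)⁻¹ * Quotient.out c ∈ N := by
    rw [inv_mul_cancel]; exact N.one_mem
  rw [Fu_spec N θ u (Quotient.out c) c (QuotientGroup.out_eq' c) hk]
  have h1 : (⟨(Quotient.out c)⁻¹ * Quotient.out c, hk⟩ : ↥N) = 1 :=
    Subtype.ext (inv_mul_cancel _)
  rw [h1, inv_one, map_one]
  simp
lemma Fu_isHecke (hN : N.Normal) (u : (c : G ⧸ N) → ↥(interSpace N θ (Quotient.out c))) :
    IsHecke N θ (Fu N θ u) := by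
  intro g k₁ k₂
  set c : G ⧸ N := QuotientGroup.mk g with hc
  set s : G := Quotient.out c with hs
  have hk : s⁻¹ * g ∈ N := key_mem N g
  have hm : s⁻¹ * (k₁ : G) * s ∈ N := by
    have := hN.conj_mem (k₁ : G) k₁.2 s⁻¹
    simpa [mul_assoc] using this
  have hmk : (QuotientGroup.mk ((k₁ : G) * g * (k₂ : G)) : G ⧸ N) = c := by
    rw [hc]
    apply QuotientGroup.eq.mpr
    have h1 : ((k₁ : G) * g * (k₂ : G))⁻¹ * g = (k₂ : G)⁻¹ * (g⁻¹ * (k₁ : G)⁻¹ * g) := by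
      group
    rw [h1]
    refine N.mul_mem (N.inv_mem k₂.2) ?_
    have := hN.conj_mem ((k₁ : G)⁻¹) (N.inv_mem k₁.2) g⁻¹
    simpa [mul_assoc] using this
  have hk' : s⁻¹ * ((k₁ : G) * g * (k₂ : G)) ∈ N := by
    have h1 : s⁻¹ * ((k₁ : G) * g * (k₂ : G))
        = (s⁻¹ * (k₁ : G) * s) * (s⁻¹ * g) * (k₂ : G) := by group
    rw [h1]
    exact N.mul_mem (N.mul_mem hm hk) k₂.2
  rw [Fu_spec N θ u _ c hmk hk', Fu_spec N θ u g c hc.symm hk]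
  have hsplit : (⟨s⁻¹ * ((k₁ : G) * g * (k₂ : G)), hk'⟩ : ↥N)
      = ⟨s⁻¹ * (k₁ : G) * s, hm⟩ * ⟨s⁻¹ * g, hk⟩ * k₂ := by
    apply Subtype.ext
    show s⁻¹ * ((k₁ : G) * g * (k₂ : G)) = (s⁻¹ * (k₁ : G) * s) * (s⁻¹ * g) * (k₂ : G)
    group
  have h4 := (u c).2 (k₁ : G) k₁.2 hm
  have heta : (⟨(k₁ : G), k₁.2⟩ : ↥N) = k₁ := rfl
  rw [heta] at h4
  replace h4 : (u c : V →ₗ[ℂ] V) ∘ₗ (θ k₁).toLinearMap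
      = (θ (⟨s⁻¹ * (k₁ : G) * s, hm⟩ : ↥N)).toLinearMap ∘ₗ (u c : V →ₗ[ℂ] V) := h4
  have h6 : (θ (⟨s⁻¹ * (k₁ : G) * s, hm⟩ : ↥N)⁻¹).toLinearMap ∘ₗ (u c : V →ₗ[ℂ] V)
      = (u c : V →ₗ[ℂ] V) ∘ₗ (θ k₁⁻¹).toLinearMap := by
    have h5 := congrArg (fun A => (θ (⟨s⁻¹ * (k₁ : G) * s, hm⟩ : ↥N)⁻¹).toLinearMap
      ∘ₗ (A ∘ₗ (θ k₁⁻¹).toLinearMap)) h4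
    simpa only [LinearMap.comp_assoc, theta_comp_inv, theta_inv_comp, theta_cancel₁,
      theta_cancel₂, LinearMap.comp_id, LinearMap.id_comp] using h5
  rw [hsplit]
  simp only [mul_inv_rev, thetaL_mul, LinearMap.comp_assoc, h6]
  rfl

lemma Phi_surjective (hN : N.Normal) : Function.Surjective (Phi N θ) := by
  intro u
  refine ⟨⟨Fu N θ u, Fu_isHecke N θ hN u⟩, ?_⟩
  funext c
  apply Subtype.ext
  show Fu N θ u (Quotient.out c) = (u c : V →ₗ[ℂ] V)
  exact Fu_out N θ u c
lemma nontrivialV (hirr : IsIrreducibleRep θ) : Nontrivial V := by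
  by_contra h
  rw [not_nontrivial_iff_subsingleton] at h
  exact hirr.1 (Subsingleton.elim _ _)

lemma schur_endo (hirr : IsIrreducibleRep θ) (A : V →ₗ[ℂ] V)
    (hA : ∀ n : ↥N, A ∘ₗ (θ n).toLinearMap = (θ n).toLinearMap ∘ₗ A) :
    ∃ c : ℂ, A = c • LinearMap.id := by
  haveI := nontrivialV N θ hirr
  obtain ⟨μ, hμ⟩ := Module.End.exists_eigenvalue (A : Module.End ℂ V)
  refine ⟨μ, ?_⟩
  have hinv : ∀ (n : ↥N) (x : V), x ∈ Module.End.eigenspace (A : Module.End ℂ V) μ →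
      θ n x ∈ Module.End.eigenspace (A : Module.End ℂ V) μ := by
    intro n x hx
    rw [Module.End.mem_eigenspace_iff] at hx ⊢
    have h1 := LinearMap.congr_fun (hA n) x
    simp only [LinearMap.comp_apply, LinearEquiv.coe_coe] at h1
    rw [show ((A : Module.End ℂ V) : V →ₗ[ℂ] V) (θ n x) = A (θ n x) from rfl, h1, hx, map_smul]
  rcases hirr.2 (Module.End.eigenspace (A : Module.End ℂ V) μ) hinv with h | h
  · exact absurd h (Module.End.hasEigenvalue_iff.mp hμ)
  · apply LinearMap.ext
    intro x
    have hx : x ∈ Module.End.eigenspace (A : Module.End ℂ V) μ := h ▸ Submodule.mem_top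
    rw [Module.End.mem_eigenspace_iff] at hx
    simpa using hx

lemma equiv_comp_symm (e : V ≃ₗ[ℂ] V) :
    e.toLinearMap ∘ₗ e.symm.toLinearMap = LinearMap.id := by
  apply LinearMap.ext; intro v; simp

lemma equiv_symm_comp (e : V ≃ₗ[ℂ] V) :
    e.symm.toLinearMap ∘ₗ e.toLinearMap = LinearMap.id := by
  apply LinearMap.ext; intro v; simp

lemma equiv_cancel₁ (e : V ≃ₗ[ℂ] V) (X : V →ₗ[ℂ] V) :
    e.toLinearMap ∘ₗ (e.symm.toLinearMap ∘ₗ X) = X := by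
  apply LinearMap.ext; intro v; simp

lemma equiv_cancel₂ (e : V ≃ₗ[ℂ] V) (X : V →ₗ[ℂ] V) :
    e.symm.toLinearMap ∘ₗ (e.toLinearMap ∘ₗ X) = X := by
  apply LinearMap.ext; intro v; simp

lemma interSpace_eq_bot (hN : N.Normal) (hirr : IsIrreducibleRep θ) {I : Subgroup G}
    (hI : IsInertia N θ I) {s : G} (hs : s ∉ I) : interSpace N θ s = ⊥ := by
  rw [Submodule.eq_bot_iff]
  intro T hT
  by_contra hT0
  have hker : ∀ (n : ↥N) (x : V), x ∈ LinearMap.ker T → θ n x ∈ LinearMap.ker T := by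
    intro n x hx
    rw [LinearMap.mem_ker] at hx ⊢
    have hm : s⁻¹ * (n : G) * s ∈ N := by
      have := hN.conj_mem (n : G) n.2 s⁻¹
      simpa [mul_assoc] using this
    have h1 := LinearMap.congr_fun (hT (n : G) n.2 hm) x
    simp only [LinearMap.comp_apply, LinearEquiv.coe_coe] at h1
    have heta : (⟨(n : G), n.2⟩ : ↥N) = n := rfl
    rw [heta] at h1
    rw [h1, hx, map_zero]
  rcases hirr.2 (LinearMap.ker T) hker with h | h
  · -- T injective, hence bijective; contradiction with s ∉ I
    have hinj : Function.Injective T := LinearMap.ker_eq_bot.mp h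
    have hbij : Function.Bijective T := ⟨hinj, LinearMap.injective_iff_surjective.mp hinj⟩
    apply hs
    apply (hI s).mpr
    refine ⟨LinearEquiv.ofBijective T hbij, ?_⟩
    intro n m hn hm heq
    subst heq
    have hcoe : (LinearEquiv.ofBijective T hbij).toLinearMap = T := rfl
    rw [hcoe]
    exact hT n hn hm
  · exact hT0 (LinearMap.ker_eq_top.mp h)

lemma finrank_interSpace (hN : N.Normal) (hirr : IsIrreducibleRep θ) {I : Subgroup G}
    (hI : IsInertia N θ I) (s : G) :
    Module.finrank ℂ ↥(interSpace N θ s) = if s ∈ I then 1 else 0 := by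
  by_cases hs : s ∈ I
  · rw [if_pos hs]
    obtain ⟨T₀, hT₀⟩ := (hI s).mp hs
    have hmem : T₀.toLinearMap ∈ interSpace N θ s := fun x hx hx' =>
      hT₀ x (s⁻¹ * x * s) hx hx' rfl
    haveI := nontrivialV N θ hirr
    have hne : T₀.toLinearMap ≠ 0 := by
      intro h0
      obtain ⟨v, hv⟩ := exists_ne (0 : V)
      apply hv
      have : T₀ v = 0 := by
        have := LinearMap.congr_fun h0 v
        simpa using this
      exact (LinearEquiv.map_eq_zero_iff T₀).mp this
    have hspan : interSpace N θ s = Submodule.span ℂ {T₀.toLinearMap} := by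
      apply le_antisymm
      · intro T' hT'
        have hA : ∀ n : ↥N, (T₀.symm.toLinearMap ∘ₗ T') ∘ₗ (θ n).toLinearMap
            = (θ n).toLinearMap ∘ₗ (T₀.symm.toLinearMap ∘ₗ T') := by
          intro n
          have hm : s⁻¹ * (n : G) * s ∈ N := by
            have := hN.conj_mem (n : G) n.2 s⁻¹
            simpa [mul_assoc] using this
          have heta : (⟨(n : G), n.2⟩ : ↥N) = n := rfl
          have h1 := hT' (n : G) n.2 hm
          rw [heta] at h1
          have h2 := hT₀ (n : G) (s⁻¹ * (n : G) * s) n.2 hm rfl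
          rw [heta] at h2
          -- h2 : T₀ ∘ θ n = θ m ∘ T₀   ⇒ T₀.symm ∘ θ m = θ n ∘ T₀.symm
          have h3 : T₀.symm.toLinearMap ∘ₗ (θ (⟨s⁻¹ * (n : G) * s, hm⟩ : ↥N)).toLinearMap
              = (θ n).toLinearMap ∘ₗ T₀.symm.toLinearMap := by
            have h5 := congrArg (fun A => T₀.symm.toLinearMap ∘ₗ (A ∘ₗ T₀.symm.toLinearMap)) h2
            simpa only [LinearMap.comp_assoc, equiv_cancel₁, equiv_cancel₂,
              equiv_comp_symm, equiv_symm_comp,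
              LinearMap.comp_id, LinearMap.id_comp] using h5.symm
          calc (T₀.symm.toLinearMap ∘ₗ T') ∘ₗ (θ n).toLinearMap
              = T₀.symm.toLinearMap ∘ₗ (T' ∘ₗ (θ n).toLinearMap) := by
                rw [LinearMap.comp_assoc]
            _ = T₀.symm.toLinearMap
                ∘ₗ ((θ (⟨s⁻¹ * (n : G) * s, hm⟩ : ↥N)).toLinearMap ∘ₗ T') := by rw [h1]
            _ = (T₀.symm.toLinearMap
                ∘ₗ (θ (⟨s⁻¹ * (n : G) * s, hm⟩ : ↥N)).toLinearMap) ∘ₗ T' := by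
                rw [LinearMap.comp_assoc]
            _ = ((θ n).toLinearMap ∘ₗ T₀.symm.toLinearMap) ∘ₗ T' := by rw [h3]
            _ = (θ n).toLinearMap ∘ₗ (T₀.symm.toLinearMap ∘ₗ T') := by
                rw [LinearMap.comp_assoc]
        obtain ⟨c, hc⟩ := schur_endo N θ hirr (T₀.symm.toLinearMap ∘ₗ T') hA
        have hT'eq : T' = c • T₀.toLinearMap := by
          have h7 : T₀.toLinearMap ∘ₗ (T₀.symm.toLinearMap ∘ₗ T') = T' := equiv_cancel₁ T₀ T'
          rw [hc] at h7
          rw [← h7]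
          apply LinearMap.ext; intro v
          simp
        rw [Submodule.mem_span_singleton]
        exact ⟨c, hT'eq.symm⟩
      · rw [Submodule.span_singleton_le_iff_mem]
        exact hmem
    rw [hspan]
    exact finrank_span_singleton hne
  · rw [if_neg hs, interSpace_eq_bot N θ hN hirr hI hs, finrank_bot]
lemma out_mem_of_mem {I : Subgroup G} (hNI : N ≤ I) (i : ↥I) :
    Quotient.out (QuotientGroup.mk (i : G) : G ⧸ N) ∈ I := by
  have h := key_mem N (i : G)
  have h2 : Quotient.out (QuotientGroup.mk (i : G) : G ⧸ N)
      = (i : G) * ((Quotient.out (QuotientGroup.mk (i : G) : G ⧸ N))⁻¹ * (i : G))⁻¹ := by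
    group
  rw [h2]
  exact I.mul_mem i.2 (I.inv_mem (hNI h))

/-- The natural bijection between `I / N` and the set of `N`-cosets meeting `I`. -/
def cosetMap (I : Subgroup G) (hNI : N ≤ I) :
    (↥I ⧸ N.subgroupOf I) → {c : G ⧸ N // Quotient.out c ∈ I} := fun x =>
  Quotient.liftOn' x (fun i => ⟨QuotientGroup.mk (i : G), out_mem_of_mem N hNI i⟩)
    (by
      intro a b h
      rw [QuotientGroup.leftRel_apply] at h
      apply Subtype.ext
      apply QuotientGroup.eq.mpr
      simpa [Subgroup.mem_subgroupOf] using h)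

lemma cosetMap_bijective (I : Subgroup G) (hNI : N ≤ I) :
    Function.Bijective (cosetMap N I hNI) := by
  constructor
  · intro x y h
    induction x using Quotient.inductionOn'
    induction y using Quotient.inductionOn'
    rename_i a b
    have h1 : (QuotientGroup.mk (a : G) : G ⧸ N) = QuotientGroup.mk (b : G) :=
      congrArg Subtype.val h
    have h2 : (a : G)⁻¹ * (b : G) ∈ N := QuotientGroup.eq.mp h1
    apply QuotientGroup.eq.mpr
    simpa [Subgroup.mem_subgroupOf] using h2
  · rintro ⟨c, hc⟩
    refine ⟨QuotientGroup.mk (⟨Quotient.out c, hc⟩ : ↥I), ?_⟩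
    apply Subtype.ext
    show (QuotientGroup.mk (Quotient.out c) : G ⧸ N) = c
    exact QuotientGroup.out_eq' c

end Statement14Aux

/-- For a normal subgroup `N ⊴ G` and an irreducible unitary
`N`-representation `θ`, the dimension of the commutant `End_G(Ind_N^G V)` equals the index
`[I_G(θ) : N]` of `N` in the inertia group. -/
theorem statement14 (N : Subgroup G) (hN : N.Normal) (θ : ↥N →* (V ≃ₗ[ℂ] V))
    (hu : IsUnitaryRep θ) (hirr : IsIrreducibleRep θ)
    (I : Subgroup G) (hI : IsInertia N θ I) :
    Module.finrank ℂ ↥(commutant N θ) = N.relIndex I := by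
  classical
  haveI : Fintype (G ⧸ N) := Fintype.ofFinite _
  have hNI : N ≤ I := by
    intro n hn
    apply (hI n).mpr
    refine ⟨θ ((⟨n, hn⟩ : ↥N)⁻¹), ?_⟩
    intro a m ha hm heq
    have hmeq : (⟨m, hm⟩ : ↥N) = (⟨n, hn⟩ : ↥N)⁻¹ * ⟨a, ha⟩ * ⟨n, hn⟩ := by
      apply Subtype.ext
      show m = n⁻¹ * a * n
      exact heq
    rw [hmeq]
    simp only [thetaL_mul N θ, LinearMap.comp_assoc, theta_comp_inv N θ,
      theta_inv_comp N θ, theta_cancel₁ N θ, theta_cancel₂ N θ, LinearMap.comp_id]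
  have e1 : Module.finrank ℂ ↥(commutant N θ) = Module.finrank ℂ ↥(heckeM N θ) :=
    (LinearEquiv.ofBijective (Psi N θ) ⟨Psi_injective N θ, Psi_surjective N θ⟩).finrank_eq.symm
  have e2 : Module.finrank ℂ ↥(heckeM N θ)
      = Module.finrank ℂ ((c : G ⧸ N) → ↥(interSpace N θ (Quotient.out c))) :=
    (LinearEquiv.ofBijective (Phi N θ) ⟨Phi_injective N θ, Phi_surjective N θ hN⟩).finrank_eq
  rw [e1, e2, Module.finrank_pi_fintype ℂ]
  have e3 : ∀ c : G ⧸ N, Module.finrank ℂ ↥(interSpace N θ (Quotient.out c))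
      = if Quotient.out c ∈ I then 1 else 0 := fun c => finrank_interSpace N θ hN hirr hI _
  rw [Finset.sum_congr rfl fun c _ => e3 c, ← Finset.card_filter,
    ← Fintype.card_subtype, ← Nat.card_eq_fintype_card,
    ← Nat.card_eq_of_bijective _ (cosetMap_bijective N I hNI)]
  exact (Subgroup.index_eq_card _).symm

end MFT
end
end

section
/- (Gelfand–Graev representation) Let q be a prime power, G = GL(2,F_q), U = {(1 b; 0 1) : b ∈ F_q} the subgroup of unipotent upper-triangular matrices, and χ a nontrivial one-dimensional character of U (equivalently, a nontrivial additive character of F_q). Then the induced representation Ind_U^G χ is multiplicity-free: every irreducible representation of G occurs in Ind_U^G χ with multiplicity at most 1. -/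
open scoped BigOperators ComplexConjugate Classical

set_option linter.unusedSectionVars false
set_option synthInstance.maxHeartbeats 1000000
set_option maxHeartbeats 1000000

noncomputable section

namespace GLMF

/-- Left translation of functions on `G`: `(translate h f) g = f (h⁻¹ * g)`. -/
def translate {G A : Type} [Group G] (h : G) (f : G → A) : G → A := fun g => f (h⁻¹ * g)

/-- Irreducibility of a representation. -/
def IsIrreducibleRep {H W : Type} [Group H] [AddCommGroup W] [Module ℂ W]
    (ρ : H →* (W ≃ₗ[ℂ] W)) : Prop :=
  (⊥ : Submodule ℂ W) ≠ ⊤ ∧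
    ∀ p : Submodule ℂ W, (∀ (h : H) (x : W), x ∈ p → ρ h x ∈ p) → p = ⊥ ∨ p = ⊤

/-- The space of the representation of `G` induced by a one-dimensional character `χ` of the
subgroup `K`: functions `f : G → ℂ` with `f (g k) = χ(k)⁻¹ f g`. -/
def indChar {G : Type} [Group G] (K : Subgroup G) (χ : ↥K →* ℂ) : Submodule ℂ (G → ℂ) where
  carrier := {f | ∀ (g : G) (k : K), f (g * (k : G)) = (χ k)⁻¹ * f g}
  add_mem' := by
    intro a b ha hb g k
    simp only [Pi.add_apply, ha g k, hb g k, mul_add]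
  zero_mem' := by intro g k; simp
  smul_mem' := by
    intro c a ha g k
    simp only [Pi.smul_apply, smul_eq_mul, ha g k]
    ring

/-- The space `Hom_G(W, Ind_K^G χ)` of `G`-equivariant linear maps from `(σ, W)` to the
representation induced by the character `χ`. -/
def homGIndChar {G : Type} [Group G] (K : Subgroup G) (χ : ↥K →* ℂ)
    {W : Type} [AddCommGroup W] [Module ℂ W] (σ : G →* (W ≃ₗ[ℂ] W)) :
    Submodule ℂ (W →ₗ[ℂ] (G → ℂ)) where
  carrier := {A | (∀ w : W, A w ∈ indChar K χ) ∧
    ∀ (g : G) (w : W), A (σ g w) = translate g (A w)}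
  add_mem' := by
    rintro A B ⟨hA₁, hA₂⟩ ⟨hB₁, hB₂⟩
    refine ⟨fun w => (indChar K χ).add_mem (hA₁ w) (hB₁ w), fun g w => ?_⟩
    funext x
    simp [translate, hA₂ g w, hB₂ g w]
  zero_mem' := by
    refine ⟨fun w => (indChar K χ).zero_mem, fun g w => ?_⟩
    funext x
    simp [translate]
  smul_mem' := by
    rintro c A ⟨hA₁, hA₂⟩
    refine ⟨fun w => (indChar K χ).smul_mem c (hA₁ w), fun g w => ?_⟩
    funext x
    simp [translate, hA₂ g w]

/-- The representation of `G` induced by the one-dimensional character `χ` of `K ≤ G` is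
multiplicity-free: every irreducible representation of `G` occurs in it with multiplicity at
most `1`. -/
def IsMultFreeChar {G : Type} [Group G] (K : Subgroup G) (χ : ↥K →* ℂ) : Prop :=
  ∀ (W : Type) [AddCommGroup W] [Module ℂ W] [FiniteDimensional ℂ W]
    (σ : G →* (W ≃ₗ[ℂ] W)), IsIrreducibleRep σ →
      Module.finrank ℂ ↥(homGIndChar K χ σ) ≤ 1

variable (F : Type) [Field F] [Fintype F] [DecidableEq F]

/-- The unipotent subgroup `U = {(1 b; 0 1) : b ∈ F}` of `GL(2,F)`. -/
def unipotent : Subgroup (Matrix.GeneralLinearGroup (Fin 2) F) where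
  carrier := {g | ∃ b : F, (g : Matrix (Fin 2) (Fin 2) F) = !![1, b; 0, 1]}
  one_mem' := ⟨0, by simp [Matrix.one_fin_two]⟩
  mul_mem' := by
    rintro x y ⟨b, hx⟩ ⟨d, hy⟩
    refine ⟨d + b, ?_⟩
    show ((x * y : Matrix.GeneralLinearGroup (Fin 2) F) : Matrix (Fin 2) (Fin 2) F) = _
    rw [Units.val_mul, hx, hy, Matrix.mul_fin_two]
    norm_num
  inv_mem' := by
    rintro x ⟨b, hx⟩
    refine ⟨-b, ?_⟩
    have h : (x : Matrix (Fin 2) (Fin 2) F) * !![1, -b; 0, 1] = 1 := by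
      rw [hx, Matrix.mul_fin_two]
      norm_num
      exact Matrix.one_fin_two.symm
    exact Units.inv_eq_of_mul_eq_one_right h

/-- The Cartan subgroup `C = {(a ηb; b a)}` of `GL(2,F)`, where `η` is a fixed generator of
the multiplicative group `F*`. -/
def cartan (eta : F) : Subgroup (Matrix.GeneralLinearGroup (Fin 2) F) where
  carrier := {g | ∃ a b : F, (g : Matrix (Fin 2) (Fin 2) F) = !![a, eta * b; b, a]}
  one_mem' := ⟨1, 0, by rw [mul_zero]; exact Matrix.one_fin_two⟩
  mul_mem' := by
    rintro x y ⟨a, b, hx⟩ ⟨c, d, hy⟩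
    refine ⟨a * c + eta * b * d, a * d + b * c, ?_⟩
    show ((x * y : Matrix.GeneralLinearGroup (Fin 2) F) : Matrix (Fin 2) (Fin 2) F) = _
    rw [Units.val_mul, hx, hy, Matrix.mul_fin_two]
    congr 1 <;> ring
  inv_mem' := by
    rintro x ⟨a, b, hx⟩
    have hdet : a * a - eta * b * b ≠ 0 := by
      have hu : IsUnit ((x : Matrix (Fin 2) (Fin 2) F)).det :=
        (Matrix.isUnit_iff_isUnit_det _).mp x.isUnit
      rw [hx, Matrix.det_fin_two_of] at hu
      simpa [isUnit_iff_ne_zero, mul_comm, mul_assoc, mul_left_comm, sub_eq_iff_eq_add]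
        using hu
    set D : F := a * a - eta * b * b with hD
    refine ⟨a / D, -(b / D), ?_⟩
    have h : (x : Matrix (Fin 2) (Fin 2) F) * !![a / D, eta * -(b / D); -(b / D), a / D] = 1 := by
      rw [hx, Matrix.mul_fin_two]
      have : ∀ u v w z : F, u = 1 → v = 0 → w = 0 → z = 1 → !![u, v; w, z] = 1 := by
        rintro u v w z rfl rfl rfl rfl
        exact Matrix.one_fin_two.symm
      refine this _ _ _ _ ?_ ?_ ?_ ?_ <;> field_simp <;> ring
    exact Units.inv_eq_of_mul_eq_one_right h

/-- The embedding `GL(2,F) → GL(2,K)` induced by a field extension `F ⊆ K`. -/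
def glEmbed (K : Type) [Field K] [Fintype K] [DecidableEq K] [Algebra F K] :
    Matrix.GeneralLinearGroup (Fin 2) F →* Matrix.GeneralLinearGroup (Fin 2) K :=
  Units.map ((algebraMap F K).mapMatrix).toMonoidHom

variable {F}

abbrev GL2 (F : Type) [Field F] [Fintype F] [DecidableEq F] := Matrix.GeneralLinearGroup (Fin 2) F

def uElt (b : F) : GL2 F where
  val := !![1, b; 0, 1]
  inv := !![1, -b; 0, 1]
  val_inv := by simp [Matrix.mul_fin_two, Matrix.one_fin_two]
  inv_val := by simp [Matrix.mul_fin_two, Matrix.one_fin_two]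

@[simp] lemma uElt_val (b : F) : (uElt b).val = !![1, b; 0, 1] := rfl

lemma uElt_mul (b c : F) : uElt b * uElt c = uElt (b + c) := by
  ext : 1
  show (uElt b).val * (uElt c).val = _
  simp [Matrix.mul_fin_two, add_comm]

@[simp] lemma uElt_zero : (uElt (0:F)) = 1 := by
  ext : 1
  show (uElt (0:F)).val = 1
  simp [Matrix.one_fin_two]

lemma uElt_inv (b : F) : (uElt b)⁻¹ = uElt (-b) := by
  rw [inv_eq_iff_mul_eq_one, uElt_mul]
  simp

-- tau
def sMat (F : Type) [Field F] [Fintype F] [DecidableEq F] : Matrix (Fin 2) (Fin 2) F := !![0,1;1,0]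

lemma sMat_mul_self : sMat F * sMat F = 1 := by
  simp [sMat, Matrix.mul_fin_two, Matrix.one_fin_two]

def tau (g : GL2 F) : GL2 F where
  val := sMat F * g.val.transpose * sMat F
  inv := sMat F * g.inv.transpose * sMat F
  val_inv := by
    have h1 : g.inv * g.val = 1 := g.inv_val
    calc sMat F * g.val.transpose * sMat F * (sMat F * g.inv.transpose * sMat F)
        = sMat F * (g.val.transpose * (sMat F * sMat F) * g.inv.transpose) * sMat F := by
          noncomm_ring
      _ = 1 := by
          rw [sMat_mul_self]
          rw [mul_one, ← Matrix.transpose_mul, h1]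
          simp [sMat_mul_self]
  inv_val := by
    have h1 : g.val * g.inv = 1 := g.val_inv
    calc sMat F * g.inv.transpose * sMat F * (sMat F * g.val.transpose * sMat F)
        = sMat F * (g.inv.transpose * (sMat F * sMat F) * g.val.transpose) * sMat F := by
          noncomm_ring
      _ = 1 := by
          rw [sMat_mul_self]
          rw [mul_one, ← Matrix.transpose_mul, h1]
          simp [sMat_mul_self]

lemma tau_val (g : GL2 F) :
    (tau g).val = !![g.val 1 1, g.val 0 1; g.val 1 0, g.val 0 0] := by
  show sMat F * g.val.transpose * sMat F = _
  ext i j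
  fin_cases i <;> fin_cases j <;>
    simp [sMat, Matrix.mul_apply, Matrix.vecMul, dotProduct, Fin.sum_univ_two, Matrix.vecHead, Matrix.vecTail,
      Matrix.transpose_apply]

lemma tau_mul (g h : GL2 F) : tau (g * h) = tau h * tau g := by
  ext : 1
  show sMat F * ((g.val * h.val)).transpose * sMat F
      = (sMat F * h.val.transpose * sMat F) * (sMat F * g.val.transpose * sMat F)
  rw [Matrix.transpose_mul]
  calc sMat F * (h.val.transpose * g.val.transpose) * sMat F
      = sMat F * h.val.transpose * (sMat F * sMat F) * g.val.transpose * sMat F := by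
        rw [sMat_mul_self]; noncomm_ring
    _ = _ := by noncomm_ring

lemma tau_uElt (b : F) : tau (uElt b) = uElt b := by
  ext : 1
  rw [tau_val]
  simp

lemma tau_antidiag (m : GL2 F) (h0 : m.val 0 0 = 0) (h1 : m.val 1 1 = 0) : tau m = m := by
  ext : 1
  rw [tau_val, Matrix.eta_fin_two m.val, h0, h1]
  simp

lemma det_ne (g : GL2 F) : g.val 0 0 * g.val 1 1 - g.val 0 1 * g.val 1 0 ≠ 0 := by
  have hu : IsUnit (g.val.det) := (Matrix.isUnit_iff_isUnit_det _).mp g.isUnit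
  rw [Matrix.det_fin_two] at hu
  simpa [isUnit_iff_ne_zero] using hu

lemma big_cell (g : GL2 F) (hc : g.val 1 0 ≠ 0) :
    ∃ (x y : F) (m : GL2 F), m.val 0 0 = 0 ∧ m.val 1 1 = 0 ∧ g = uElt x * m * uElt y := by
  set x : F := g.val 0 0 * (g.val 1 0)⁻¹ with hx
  set y : F := g.val 1 1 * (g.val 1 0)⁻¹ with hy
  refine ⟨x, y, uElt (-x) * g * uElt (-y), ?_, ?_, ?_⟩
  · show ((uElt (-x)).val * g.val * (uElt (-y)).val) 0 0 = 0
    rw [Matrix.eta_fin_two g.val]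
    simp only [uElt_val, Matrix.mul_fin_two]
    norm_num [hx]
    field_simp
    ring
  · show ((uElt (-x)).val * g.val * (uElt (-y)).val) 1 1 = 0
    rw [Matrix.eta_fin_two g.val]
    simp only [uElt_val, Matrix.mul_fin_two]
    norm_num [hy]
    field_simp
    ring
  · have h1 : uElt x * uElt (-x) = 1 := by rw [uElt_mul]; simp
    have h2 : uElt (-y) * uElt y = 1 := by rw [uElt_mul]; simp
    have h3 : uElt x * (uElt (-x) * g * uElt (-y)) * uElt y
        = (uElt x * uElt (-x)) * g * (uElt (-y) * uElt y) := by
      simp only [mul_assoc]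
    rw [h3, h1, h2, one_mul, mul_one]

lemma upper_cell (g : GL2 F) (hc : g.val 1 0 = 0) :
    ∃ (y : F) (t : GL2 F) (a d : F), a ≠ 0 ∧ d ≠ 0 ∧ t.val = !![a, 0; 0, d] ∧
      g = t * uElt y := by
  have hdet := det_ne g
  rw [hc, mul_zero, sub_zero] at hdet
  have ha : g.val 0 0 ≠ 0 := fun h => hdet (by rw [h, zero_mul])
  have hd : g.val 1 1 ≠ 0 := fun h => hdet (by rw [h, mul_zero])
  set y : F := g.val 0 1 * (g.val 0 0)⁻¹ with hy
  refine ⟨y, g * uElt (-y), g.val 0 0, g.val 1 1, ha, hd, ?_, ?_⟩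
  · show g.val * (uElt (-y)).val = _
    rw [Matrix.eta_fin_two g.val]
    simp only [uElt_val, Matrix.mul_fin_two]
    norm_num [hy, hc]
    have h0 : -(g.val 0 0 * (g.val 0 1 * (g.val 0 0)⁻¹)) + g.val 0 1 = 0 := by field_simp; ring
    rw [h0]
  · rw [mul_assoc, uElt_mul]
    simp

lemma tau_diag (t : GL2 F) (a d : F) (ht : t.val = !![a, 0; 0, d]) :
    (tau t).val = !![d, 0; 0, a] := by
  rw [tau_val, ht]
  norm_num

lemma diag_comm (t : GL2 F) (a d : F) (ht : t.val = !![a, 0; 0, d]) (hd : d ≠ 0) (b : F) :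
    t * uElt b = uElt (a * b * d⁻¹) * t := by
  ext : 1
  show t.val * (uElt b).val = (uElt (a * b * d⁻¹)).val * t.val
  rw [ht]
  simp only [uElt_val, Matrix.mul_fin_two]
  norm_num
  field_simp


/-! ### The additive character ψ associated to a character of the unipotent subgroup -/

def uU (b : F) : ↥(unipotent F) := ⟨uElt b, ⟨b, rfl⟩⟩

lemma uU_mul (b c : F) : uU b * uU c = uU (b + c) := Subtype.ext (uElt_mul b c)

lemma uU_surj (k : ↥(unipotent F)) : ∃ b : F, k = uU b := by
  obtain ⟨b, hb⟩ := k.2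
  exact ⟨b, Subtype.ext (Units.ext hb)⟩

variable (χ' : ↥(unipotent F) →* ℂ)

def psi (b : F) : ℂ := χ' (uU b)

lemma psi_add (b c : F) : psi χ' (b + c) = psi χ' b * psi χ' c := by
  rw [psi, psi, psi, ← map_mul, uU_mul]

lemma psi_zero : psi χ' 0 = 1 := by
  have h : uU (0 : F) = 1 := Subtype.ext uElt_zero
  rw [psi, h, map_one]

lemma psi_mul_neg (b : F) : psi χ' b * psi χ' (-b) = 1 := by
  rw [← psi_add, add_neg_cancel, psi_zero]

lemma psi_ne_zero (b : F) : psi χ' b ≠ 0 :=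
  left_ne_zero_of_mul_eq_one (psi_mul_neg χ' b)

lemma psi_inv (b : F) : (psi χ' b)⁻¹ = psi χ' (-b) :=
  eq_inv_of_mul_eq_one_left (by rw [mul_comm]; exact psi_mul_neg χ' b) |>.symm

lemma psi_sum (hχ' : χ' ≠ 1) : ∑ b : F, psi χ' b = 0 := by
  obtain ⟨k, hk⟩ : ∃ k, χ' k ≠ 1 := by
    by_contra h
    push_neg at h
    exact hχ' (MonoidHom.ext fun k => (h k).trans rfl)
  obtain ⟨b₀, rfl⟩ := uU_surj k
  have h1 : psi χ' b₀ * ∑ b : F, psi χ' b = ∑ b : F, psi χ' b := by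
    rw [Finset.mul_sum]
    rw [show ∑ b : F, psi χ' b₀ * psi χ' b = ∑ b : F, psi χ' (b₀ + b) by
      exact Finset.sum_congr rfl fun b _ => (psi_add χ' b₀ b).symm]
    exact Fintype.sum_equiv (Equiv.addLeft b₀) _ _ fun b => rfl
  have h2 : (psi χ' b₀ - 1) * ∑ b : F, psi χ' b = 0 := by
    rw [sub_mul, one_mul, h1, sub_self]
  rcases mul_eq_zero.mp h2 with h | h
  · exact absurd (by linear_combination h : psi χ' b₀ = 1) hk
  · exact h

lemma psi_sum_mul (hχ' : χ' ≠ 1) (c : F) (hc : c ≠ 0) : ∑ b : F, psi χ' (c * b) = 0 := by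
  have := Fintype.sum_equiv (Equiv.mulLeft₀ c hc) (fun b => psi χ' (c * b)) (fun b => psi χ' b)
    (fun b => rfl)
  rw [this]
  exact psi_sum χ' hχ'

/-! ### Hecke operators associated to `χ'` inside the endomorphism algebra -/

section Hecke

variable {X : Type} [AddCommGroup X] [Module ℂ X]
variable (ρ : GL2 F →* (X ≃ₗ[ℂ] X))

/-- The representation as a map into the endomorphism monoid. -/
def rho' : GL2 F →* Module.End ℂ X :=
  (LinearEquiv.automorphismGroup.toLinearMapMonoidHom).comp ρ

lemma rho'_apply (g : GL2 F) (x : X) : rho' ρ g x = ρ g x := rfl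

/-- The (unnormalized) projection onto the `χ'`-eigenspace of the unipotent subgroup. -/
def eps : Module.End ℂ X := ∑ b : F, (psi χ' b)⁻¹ • rho' ρ (uElt b)

lemma eps_mul_u (c : F) : eps χ' ρ * rho' ρ (uElt c) = psi χ' c • eps χ' ρ := by
  rw [eps, Finset.sum_mul, Finset.smul_sum]
  have h1 : ∀ b : F, (psi χ' b)⁻¹ • rho' ρ (uElt b) * rho' ρ (uElt c)
      = (psi χ' b)⁻¹ • rho' ρ (uElt (b + c)) := by
    intro b
    rw [smul_mul_assoc, ← map_mul, uElt_mul]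
  rw [Finset.sum_congr rfl fun b _ => h1 b]
  refine (Fintype.sum_equiv (Equiv.subRight c)
    (fun b => psi χ' c • (psi χ' b)⁻¹ • rho' ρ (uElt b))
    (fun b => (psi χ' b)⁻¹ • rho' ρ (uElt (b + c))) fun b => ?_).symm
  simp only [Equiv.subRight_apply, sub_add_cancel]
  rw [smul_smul, psi_inv, psi_inv, neg_sub, ← psi_add]
  congr 2
  ring

lemma u_mul_eps (c : F) : rho' ρ (uElt c) * eps χ' ρ = psi χ' c • eps χ' ρ := by
  rw [eps, Finset.mul_sum, Finset.smul_sum]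
  have h1 : ∀ b : F, rho' ρ (uElt c) * ((psi χ' b)⁻¹ • rho' ρ (uElt b))
      = (psi χ' b)⁻¹ • rho' ρ (uElt (c + b)) := by
    intro b
    rw [mul_smul_comm, ← map_mul, uElt_mul]
  rw [Finset.sum_congr rfl fun b _ => h1 b]
  refine (Fintype.sum_equiv (Equiv.subRight c)
    (fun b => psi χ' c • (psi χ' b)⁻¹ • rho' ρ (uElt b))
    (fun b => (psi χ' b)⁻¹ • rho' ρ (uElt (c + b))) fun b => ?_).symm
  simp only [Equiv.subRight_apply]
  rw [show c + (b - c) = b by ring, smul_smul, psi_inv, psi_inv, ← psi_add]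
  congr 2
  ring

lemma eps_sq : eps χ' ρ * eps χ' ρ = (Fintype.card F : ℂ) • eps χ' ρ := by
  nth_rewrite 2 [eps]
  rw [Finset.mul_sum]
  have h1 : ∀ b : F, eps χ' ρ * ((psi χ' b)⁻¹ • rho' ρ (uElt b)) = eps χ' ρ := by
    intro b
    rw [mul_smul_comm, eps_mul_u, smul_smul, inv_mul_cancel₀ (psi_ne_zero χ' b), one_smul]
  rw [Finset.sum_congr rfl fun b _ => h1 b, Finset.sum_const, Finset.card_univ,
    ← Nat.cast_smul_eq_nsmul ℂ]

/-- The basic Hecke operators. -/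
def P (g : GL2 F) : Module.End ℂ X := eps χ' ρ * rho' ρ g * eps χ' ρ

lemma P_u_left (x : F) (g : GL2 F) : P χ' ρ (uElt x * g) = psi χ' x • P χ' ρ g := by
  rw [P, P, map_mul, ← mul_assoc, eps_mul_u, smul_mul_assoc, smul_mul_assoc]

lemma P_u_right (g : GL2 F) (y : F) : P χ' ρ (g * uElt y) = psi χ' y • P χ' ρ g := by
  rw [P, P, map_mul, mul_assoc, mul_assoc, u_mul_eps, mul_smul_comm, mul_smul_comm,
    ← mul_assoc]

lemma P_conj (x y : F) (g : GL2 F) :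
    P χ' ρ (uElt x * g * uElt y) = (psi χ' x * psi χ' y) • P χ' ρ g := by
  rw [P_u_right, P_u_left, smul_smul, mul_comm]

lemma P_diag_zero (hχ' : χ' ≠ 1) (t : GL2 F) (a d : F) (ht : t.val = !![a, 0; 0, d])
    (hd : d ≠ 0) (had : a ≠ d) : P χ' ρ t = 0 := by
  have key : P χ' ρ t = (∑ b : F, psi χ' ((a * d⁻¹ - 1) * b)) • (eps χ' ρ * rho' ρ t) := by
    rw [P]
    nth_rewrite 2 [eps]
    rw [Finset.mul_sum, Finset.sum_smul]
    refine Finset.sum_congr rfl fun b _ => ?_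
    rw [mul_smul_comm, mul_assoc, ← map_mul, diag_comm t a d ht hd b, map_mul,
      ← mul_assoc, eps_mul_u, smul_mul_assoc, smul_smul]
    congr 1
    rw [psi_inv, mul_comm, ← psi_add]
    congr 1
    ring
  rw [key, psi_sum_mul χ' hχ' _ ?_, zero_smul]
  intro h
  apply had
  have : a * d⁻¹ = 1 := by linear_combination h
  field_simp at this
  exact this

lemma P_tau (hχ' : χ' ≠ 1) (g : GL2 F) : P χ' ρ (tau g) = P χ' ρ g := by
  by_cases hc : g.val 1 0 = 0
  · obtain ⟨y, t, a, d, ha, hd, ht, hg⟩ := upper_cell g hc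
    have htau : tau g = uElt y * tau t := by rw [hg, tau_mul, tau_uElt]
    by_cases had : a = d
    · have htt : tau t = t := by
        ext : 1
        rw [tau_diag t a d ht, ht, had]
      rw [htau, htt, hg, P_u_left, P_u_right]
    · have h1 : P χ' ρ t = 0 := P_diag_zero χ' ρ hχ' t a d ht hd had
      have h2 : P χ' ρ (tau t) = 0 :=
        P_diag_zero χ' ρ hχ' (tau t) d a (tau_diag t a d ht) ha (Ne.symm had)
      rw [htau, hg, P_u_left, P_u_right, h1, h2]
  · obtain ⟨x, y, m, hm0, hm1, hg⟩ := big_cell g hc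
    have htau : tau g = uElt y * m * uElt x := by
      rw [hg, tau_mul, tau_mul, tau_uElt, tau_uElt, tau_antidiag m hm0 hm1, mul_assoc]
    rw [htau, hg, P_conj, P_conj, mul_comm (psi χ' x)]

lemma P_mul_P (g h : GL2 F) :
    P χ' ρ g * P χ' ρ h
      = (Fintype.card F : ℂ) • ∑ b : F, (psi χ' b)⁻¹ • P χ' ρ (g * uElt b * h) := by
  have h1 : P χ' ρ g * P χ' ρ h
      = (Fintype.card F : ℂ) • (eps χ' ρ * rho' ρ g * eps χ' ρ * rho' ρ h * eps χ' ρ) := by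
    rw [P, P]
    calc eps χ' ρ * rho' ρ g * eps χ' ρ * (eps χ' ρ * rho' ρ h * eps χ' ρ)
        = eps χ' ρ * rho' ρ g * (eps χ' ρ * eps χ' ρ) * rho' ρ h * eps χ' ρ := by
          simp only [mul_assoc]
      _ = _ := by
          rw [eps_sq, mul_smul_comm, smul_mul_assoc, smul_mul_assoc]
          try simp only [mul_assoc]
  rw [h1]
  congr 1
  nth_rewrite 2 [eps]
  rw [Finset.mul_sum, Finset.sum_mul, Finset.sum_mul]
  refine Finset.sum_congr rfl fun b _ => ?_
  rw [P, map_mul, map_mul]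
  simp only [smul_mul_assoc, mul_smul_comm, mul_assoc]

lemma P_comm (hχ' : χ' ≠ 1) (g h : GL2 F) : P χ' ρ g * P χ' ρ h = P χ' ρ h * P χ' ρ g := by
  have h1 : P χ' ρ g * P χ' ρ h = P χ' ρ (tau h) * P χ' ρ (tau g) := by
    rw [P_mul_P, P_mul_P]
    congr 1
    refine Finset.sum_congr rfl fun b _ => ?_
    congr 1
    rw [← P_tau χ' ρ hχ' (g * uElt b * h), tau_mul, tau_mul, tau_uElt, mul_assoc]
  rw [h1, P_tau χ' ρ hχ', P_tau χ' ρ hχ']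

end Hecke

/-! ### The eigenspace argument -/

section Eig

variable {X : Type} [AddCommGroup X] [Module ℂ X]
variable (χ' : ↥(unipotent F) →* ℂ) (ρ : GL2 F →* (X ≃ₗ[ℂ] X))

/-- The `χ'`-eigenspace of the unipotent subgroup in the representation `ρ`. -/
def eigU : Submodule ℂ X where
  carrier := {x | ∀ b : F, rho' ρ (uElt b) x = psi χ' b • x}
  add_mem' := by
    intro x y hx hy b
    rw [map_add, hx b, hy b, smul_add]
  zero_mem' := by intro b; rw [map_zero, smul_zero]
  smul_mem' := by
    intro c x hx b
    rw [LinearMap.map_smul, hx b, smul_comm]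

lemma eps_apply_mem (x : X) : eps χ' ρ x ∈ eigU χ' ρ := by
  intro b
  have h := congrFun (congrArg (DFunLike.coe) (u_mul_eps χ' ρ b)) x
  simpa [Module.End.mul_apply] using h

lemma eps_apply_eig (v : X) (hv : v ∈ eigU χ' ρ) : eps χ' ρ v = (Fintype.card F : ℂ) • v := by
  rw [eps, LinearMap.sum_apply]
  have h1 : ∀ b : F, ((psi χ' b)⁻¹ • rho' ρ (uElt b)) v = v := by
    intro b
    rw [LinearMap.smul_apply, hv b, smul_smul, inv_mul_cancel₀ (psi_ne_zero χ' b), one_smul]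
  rw [Finset.sum_congr rfl fun b _ => h1 b, Finset.sum_const, Finset.card_univ,
    ← Nat.cast_smul_eq_nsmul ℂ]

lemma P_apply_mem (g : GL2 F) (x : X) : P χ' ρ g x ∈ eigU χ' ρ := by
  have h : P χ' ρ g x = eps χ' ρ ((rho' ρ g * eps χ' ρ) x) := by
    rw [P, mul_assoc, Module.End.mul_apply]
  rw [h]
  exact eps_apply_mem χ' ρ _

/-- Linear combinations of Hecke operators. -/
def Op (c : GL2 F → ℂ) : Module.End ℂ X := ∑ g : GL2 F, c g • P χ' ρ g

lemma Op_apply_mem (c : GL2 F → ℂ) (x : X) : Op χ' ρ c x ∈ eigU χ' ρ := by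
  rw [Op, LinearMap.sum_apply]
  refine Submodule.sum_mem _ fun g _ => ?_
  rw [LinearMap.smul_apply]
  exact Submodule.smul_mem _ _ (P_apply_mem χ' ρ g x)

lemma Op_comm (hχ' : χ' ≠ 1) (c c' : GL2 F → ℂ) :
    Op χ' ρ c * Op χ' ρ c' = Op χ' ρ c' * Op χ' ρ c := by
  rw [Op, Op, Finset.sum_mul_sum, Finset.sum_mul_sum]
  rw [Finset.sum_comm]
  refine Finset.sum_congr rfl fun g _ => Finset.sum_congr rfl fun h _ => ?_
  rw [smul_mul_assoc, smul_mul_assoc, mul_smul_comm, mul_smul_comm, P_comm χ' ρ hχ' g h,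
    smul_comm]

lemma exists_Op (hirr : IsIrreducibleRep ρ) (v₀ : X) (h₀ : v₀ ∈ eigU χ' ρ) (hne : v₀ ≠ 0)
    (v : X) (hv : v ∈ eigU χ' ρ) : ∃ c : GL2 F → ℂ, Op χ' ρ c v₀ = v := by
  set M : Submodule ℂ X := Submodule.span ℂ (Set.range fun g : GL2 F => ρ g v₀) with hM
  have hMinv : ∀ (h : GL2 F) (x : X), x ∈ M → ρ h x ∈ M := by
    intro h x hx
    induction hx using Submodule.span_induction with
    | mem x hx =>
        obtain ⟨g, rfl⟩ := hx
        refine Submodule.subset_span ⟨h * g, ?_⟩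
        show ρ (h * g) v₀ = ρ h (ρ g v₀)
        rw [map_mul]
        rfl
    | zero => rw [map_zero]; exact M.zero_mem
    | add x y _ _ hx hy => rw [map_add]; exact M.add_mem hx hy
    | smul c x _ hx => rw [LinearEquiv.map_smul]; exact M.smul_mem c hx
  have hMne : M ≠ ⊥ := by
    intro h
    apply hne
    have : v₀ ∈ M := Submodule.subset_span ⟨1, by show ρ 1 v₀ = v₀; rw [map_one]; rfl⟩
    rwa [h, Submodule.mem_bot] at this
  have hMtop : M = ⊤ := ((hirr.2 M hMinv).resolve_left hMne)
  have hvM : v ∈ M := by rw [hMtop]; trivial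
  rw [hM] at hvM
  obtain ⟨c₀, hc₀⟩ := (Submodule.mem_span_range_iff_exists_fun ℂ).mp hvM
  set q : ℂ := (Fintype.card F : ℂ) with hq
  have hqne : q ≠ 0 := by
    simp [hq, Fintype.card_ne_zero]
  refine ⟨fun g => q⁻¹ * q⁻¹ * c₀ g, ?_⟩
  have hP : ∀ g : GL2 F, P χ' ρ g v₀ = q • eps χ' ρ (ρ g v₀) := by
    intro g
    rw [P, Module.End.mul_apply, Module.End.mul_apply, eps_apply_eig χ' ρ v₀ h₀]
    rw [← hq, LinearMap.map_smul, LinearMap.map_smul, rho'_apply]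
  rw [Op, LinearMap.sum_apply]
  have h2 : ∀ g : GL2 F, ((q⁻¹ * q⁻¹ * c₀ g) • P χ' ρ g) v₀
      = (q⁻¹ * c₀ g) • eps χ' ρ (ρ g v₀) := by
    intro g
    rw [LinearMap.smul_apply, hP g, smul_smul]
    congr 1
    field_simp
  rw [Finset.sum_congr rfl fun g _ => h2 g]
  have h3 : ∀ g : GL2 F, (q⁻¹ * c₀ g) • eps χ' ρ (ρ g v₀) = q⁻¹ • eps χ' ρ (c₀ g • ρ g v₀) := by
    intro g
    rw [LinearMap.map_smul, smul_smul]
  rw [Finset.sum_congr rfl fun g _ => h3 g, ← Finset.smul_sum, ← map_sum, hc₀,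
    eps_apply_eig χ' ρ v hv, ← hq, smul_smul, inv_mul_cancel₀ hqne, one_smul]

theorem key_lemma [FiniteDimensional ℂ X] (hχ' : χ' ≠ 1) (hirr : IsIrreducibleRep ρ) :
    Module.finrank ℂ ↥(eigU χ' ρ) ≤ 1 := by
  by_cases hV : eigU χ' ρ = ⊥
  · rw [hV, finrank_bot]
    norm_num
  · obtain ⟨v₁, hv₁, hv₁ne⟩ := Submodule.exists_mem_ne_zero_of_ne_bot hV
    have hle : eigU χ' ρ ≤ ℂ ∙ v₁ := by
      intro v₂ hv₂
      -- find an operator mapping v₁ to v₂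
      obtain ⟨ca, hca⟩ := exists_Op χ' ρ hirr v₁ hv₁ hv₁ne v₂ hv₂
      -- restrict to the eigenspace and find an eigenvector
      have hrestrict : ∀ x ∈ eigU χ' ρ, Op χ' ρ ca x ∈ eigU χ' ρ := fun x _ =>
        Op_apply_mem χ' ρ ca x
      set a' : Module.End ℂ ↥(eigU χ' ρ) := (Op χ' ρ ca).restrict hrestrict with ha'
      haveI : Nontrivial ↥(eigU χ' ρ) := by
        refine nontrivial_of_ne ⟨v₁, hv₁⟩ 0 ?_
        intro h
        exact hv₁ne (by simpa using congrArg Subtype.val h)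
      obtain ⟨μ, hμ⟩ := Module.End.exists_eigenvalue a'
      obtain ⟨w, hw⟩ := hμ.exists_hasEigenvector
      have hwne : (w : X) ≠ 0 := fun h => hw.right (Subtype.ext h)
      -- operator sending w to v₁
      obtain ⟨cb, hcb⟩ := exists_Op χ' ρ hirr (w : X) w.2 hwne v₁ hv₁
      -- a acts on w by μ
      have haw : Op χ' ρ ca (w : X) = μ • (w : X) := by
        have h1 := congrArg Subtype.val hw.apply_eq_smul
        rw [LinearMap.restrict_coe_apply] at h1
        simpa using h1
      have : v₂ = μ • v₁ := by
        rw [← hca, ← hcb, ← Module.End.mul_apply, Op_comm χ' ρ hχ' ca cb,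
          Module.End.mul_apply, haw, LinearMap.map_smul, hcb]
      rw [this]
      exact Submodule.smul_mem _ μ (Submodule.mem_span_singleton_self v₁)
    calc Module.finrank ℂ ↥(eigU χ' ρ) ≤ Module.finrank ℂ ↥(ℂ ∙ v₁) :=
          Submodule.finrank_mono hle
      _ = 1 := finrank_span_singleton hv₁ne

end Eig

/-- the Gelfand–Graev representation of `GL(2,F_q)`.  For every nontrivial
one-dimensional character `χ` of the unipotent subgroup `U`, the induced representation
`Ind_U^{GL(2,F_q)} χ` is multiplicity-free. -/
theorem statement16 (χ : ↥(unipotent F) →* ℂ) (hχ : χ ≠ 1) :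
    IsMultFreeChar (unipotent F) χ := by
  intro W _ _ _ σ hirr
  have hχinv : ∀ k : ↥(unipotent F), χ k⁻¹ = (χ k)⁻¹ := fun k =>
    eq_inv_of_mul_eq_one_left (by rw [← map_mul, inv_mul_cancel, map_one])
  -- the inverse character χ'
  set χ' : ↥(unipotent F) →* ℂ :=
    { toFun := fun k => χ k⁻¹
      map_one' := by show χ (1 : ↥(unipotent F))⁻¹ = 1; rw [inv_one, map_one]
      map_mul' := fun a b => by
        show χ (a * b)⁻¹ = χ a⁻¹ * χ b⁻¹
        rw [mul_inv_rev, map_mul, mul_comm] } with hχ'def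
  have hχ'app : ∀ k, χ' k = χ k⁻¹ := fun k => by rw [hχ'def]; rfl
  have hχ'ne : χ' ≠ 1 := by
    intro h
    apply hχ
    ext k
    have h1 : χ' k⁻¹ = 1 := by rw [h]; rfl
    rw [hχ'app, inv_inv] at h1
    rw [h1]; rfl
  -- W is nontrivial
  have hWnt : Nontrivial W := by
    by_contra h
    rw [not_nontrivial_iff_subsingleton] at h
    apply hirr.1
    ext x
    simp [Subsingleton.elim x 0]
  -- the dual (contragredient) representation
  set ρ : GL2 F →* ((Module.Dual ℂ W) ≃ₗ[ℂ] (Module.Dual ℂ W)) :=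
    { toFun := fun g => (σ g⁻¹).dualMap
      map_one' := by
        refine LinearEquiv.ext fun lam => LinearMap.ext fun w => ?_
        show lam (σ 1⁻¹ w) = lam w
        rw [inv_one, map_one]
        rfl
      map_mul' := fun g h => by
        refine LinearEquiv.ext fun lam => LinearMap.ext fun w => ?_
        show lam (σ (g * h)⁻¹ w) = lam (σ h⁻¹ (σ g⁻¹ w))
        rw [mul_inv_rev, map_mul]
        rfl } with hρdef
  have hρ_apply : ∀ (g : GL2 F) (lam : Module.Dual ℂ W) (w : W), (ρ g) lam w = lam (σ g⁻¹ w) := by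
    intro g lam w
    rw [hρdef]
    rfl
  -- irreducibility of the dual representation
  have hirrρ : IsIrreducibleRep ρ := by
    constructor
    · have h1 : Nontrivial (Module.Dual ℂ W) := by
        apply Module.nontrivial_of_finrank_pos (R := ℂ)
        rw [Subspace.dual_finrank_eq]
        exact Module.finrank_pos
      intro h
      obtain ⟨lam, hlam⟩ := exists_ne (0 : Module.Dual ℂ W)
      apply hlam
      have : lam ∈ (⊥ : Submodule ℂ (Module.Dual ℂ W)) := by rw [h]; trivial
      simpa using this
    · intro p hp
      have hcinv : ∀ (g : GL2 F) (x : W),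
          x ∈ p.dualCoannihilator → σ g x ∈ p.dualCoannihilator := by
        intro g x hx
        rw [Submodule.mem_dualCoannihilator] at hx ⊢
        intro lam hlam
        have h1 : (ρ g⁻¹) lam ∈ p := hp g⁻¹ lam hlam
        have h2 := hx _ h1
        rwa [hρ_apply, inv_inv] at h2
      rcases hirr.2 p.dualCoannihilator hcinv with hbot | htop
      · right
        apply Submodule.eq_top_of_finrank_eq
        have h3 := Subspace.finrank_add_finrank_dualCoannihilator_eq p
        rw [hbot, finrank_bot, add_zero] at h3
        rw [h3, Subspace.dual_finrank_eq]
      · left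
        rw [eq_bot_iff]
        intro lam hlam
        have h4 : lam = 0 := by
          apply LinearMap.ext
          intro w
          have hw : w ∈ p.dualCoannihilator := by rw [htop]; trivial
          rw [Submodule.mem_dualCoannihilator] at hw
          exact (hw lam hlam).trans rfl
        simp [h4]
  -- evaluation at the identity
  set ev1 : (GL2 F → ℂ) →ₗ[ℂ] ℂ := LinearMap.proj (1 : GL2 F) with hev1
  have hev1app : ∀ f : GL2 F → ℂ, ev1 f = f 1 := fun f => by rw [hev1]; rfl
  -- the matrix-coefficient identity A w g = A (σ g⁻¹ w) 1
  have hcoef : ∀ (A : ↥(homGIndChar (unipotent F) χ σ)) (w : W) (g : GL2 F),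
      (A : W →ₗ[ℂ] (GL2 F → ℂ)) w g = (A : W →ₗ[ℂ] (GL2 F → ℂ)) (σ g⁻¹ w) 1 := by
    intro A w g
    rw [A.2.2 g⁻¹ w]
    show _ = translate g⁻¹ ((A : W →ₗ[ℂ] (GL2 F → ℂ)) w) 1
    rw [translate, inv_inv, mul_one]
  -- the map A ↦ (w ↦ A w 1) lands in the χ'-eigenspace of the dual
  have hmem : ∀ A : ↥(homGIndChar (unipotent F) χ σ),
      ev1 ∘ₗ (A : W →ₗ[ℂ] (GL2 F → ℂ)) ∈ eigU χ' ρ := by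
    intro A b
    apply LinearMap.ext
    intro w
    have h0 := LinearMap.congr_fun (rho'_apply ρ (uElt b) (ev1 ∘ₗ (A : W →ₗ[ℂ] (GL2 F → ℂ)))) w
    rw [h0, hρ_apply, LinearMap.smul_apply, LinearMap.comp_apply, hev1app, LinearMap.comp_apply,
      hev1app]
    rw [← hcoef A w (uElt b)]
    have h2 : (uElt b : GL2 F) = ((uU b : ↥(unipotent F)) : GL2 F) := rfl
    have h3 : (A : W →ₗ[ℂ] (GL2 F → ℂ)) w (uElt b)
        = (χ (uU b))⁻¹ * (A : W →ₗ[ℂ] (GL2 F → ℂ)) w 1 := by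
      have h5 := A.2.1 w 1 (uU b)
      rwa [one_mul, ← h2] at h5
    rw [h3]
    have h4 : psi χ' b = (χ (uU b))⁻¹ := by rw [psi, hχ'app, hχinv]
    rw [h4, smul_eq_mul]
  -- package as a linear map
  set Φ : ↥(homGIndChar (unipotent F) χ σ) →ₗ[ℂ] ↥(eigU χ' ρ) :=
    { toFun := fun A => ⟨ev1 ∘ₗ (A : W →ₗ[ℂ] (GL2 F → ℂ)), hmem A⟩
      map_add' := fun A B => by
        apply Subtype.ext
        apply LinearMap.ext
        intro w
        rfl
      map_smul' := fun c A => by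
        apply Subtype.ext
        apply LinearMap.ext
        intro w
        rfl } with hΦdef
  have hΦinj : Function.Injective Φ := by
    intro A B hAB
    apply Subtype.ext
    apply LinearMap.ext
    intro w
    funext g
    rw [hcoef A w g, hcoef B w g]
    have h2 : ev1 ∘ₗ (A : W →ₗ[ℂ] (GL2 F → ℂ)) = ev1 ∘ₗ (B : W →ₗ[ℂ] (GL2 F → ℂ)) := by
      have h6 := congrArg Subtype.val hAB
      rw [hΦdef] at h6
      exact h6
    have h7 := LinearMap.congr_fun h2 (σ g⁻¹ w)
    rw [LinearMap.comp_apply, hev1app, LinearMap.comp_apply, hev1app] at h7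
    exact h7
  have hfin : Module.finrank ℂ ↥(homGIndChar (unipotent F) χ σ)
      ≤ Module.finrank ℂ ↥(eigU χ' ρ) :=
    LinearMap.finrank_le_finrank_of_injective hΦinj
  exact hfin.trans (key_lemma χ' ρ hχ'ne hirrρ)

end GLMF
end
end

section
/- Let q be an odd prime power, G = GL(2,F_q), and C the Cartan subgroup. Then for every one-dimensional character ν of C, the induced representation Ind_C^G ν is multiplicity-free; that is, C is a multiplicity-free subgroup of GL(2,F_q). -/
open scoped BigOperators ComplexConjugate Classical

set_option linter.unusedSectionVars false
set_option synthInstance.maxHeartbeats 1000000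
set_option maxHeartbeats 1000000

noncomputable section

namespace GLMF

variable (F : Type) [Field F] [Fintype F] [DecidableEq F]

section Gelfand

variable {G : Type} [Group G] (K : Subgroup G) [Fintype ↥K] (ν : ↥K →* ℂ)
variable {W : Type} [AddCommGroup W] [Module ℂ W] (σ : G →* (W ≃ₗ[ℂ] W))

lemma nu_ne_zero (k : ↥K) : ν k ≠ 0 := by
  intro h
  have h1 : ν k * ν k⁻¹ = 1 := by rw [← map_mul, mul_inv_cancel, map_one]
  rw [h, zero_mul] at h1
  exact zero_ne_one h1

lemma nu_inv (k : ↥K) : ν k⁻¹ = (ν k)⁻¹ :=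
  eq_inv_of_mul_eq_one_left (by rw [← map_mul, inv_mul_cancel, map_one])

/-- The averaging idempotent projecting onto the ν-eigenspace. -/
def pAvg : W →ₗ[ℂ] W :=
  (Fintype.card ↥K : ℂ)⁻¹ • ∑ k : ↥K, (ν k)⁻¹ • ((σ (k : G)).toLinearMap)

lemma pAvg_apply (w : W) :
    pAvg K ν σ w = (Fintype.card ↥K : ℂ)⁻¹ • ∑ k : ↥K, (ν k)⁻¹ • σ (k : G) w := by
  simp [pAvg, LinearMap.sum_apply]

lemma cardK_ne_zero : (Fintype.card ↥K : ℂ) ≠ 0 := by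
  exact_mod_cast Fintype.card_ne_zero

lemma sigma_pAvg (c : ↥K) (w : W) : σ (c : G) (pAvg K ν σ w) = ν c • pAvg K ν σ w := by
  rw [pAvg_apply, map_smul, map_sum, smul_comm (ν c)]
  congr 1
  rw [Finset.smul_sum]
  refine Fintype.sum_equiv (Equiv.mulLeft c) _ _ fun k => ?_
  calc σ (c : G) ((ν k)⁻¹ • σ (k : G) w)
      = (ν k)⁻¹ • σ ((c : G) * (k : G)) w := by rw [map_smul, map_mul]; rfl
    _ = ν c • (ν (Equiv.mulLeft c k))⁻¹ • σ (((Equiv.mulLeft c k : ↥K)) : G) w := by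
        have h1 : (((Equiv.mulLeft c k : ↥K)) : G) = (c : G) * (k : G) := rfl
        have h2 : ν (Equiv.mulLeft c k) = ν c * ν k := by
          show ν (c * k) = _ ; rw [map_mul]
        rw [h1, h2, smul_smul]
        congr 1
        rw [mul_inv]
        field_simp [nu_ne_zero K ν c, nu_ne_zero K ν k]

lemma pAvg_sigma (c : ↥K) (w : W) : pAvg K ν σ (σ (c : G) w) = ν c • pAvg K ν σ w := by
  rw [pAvg_apply, pAvg_apply, smul_comm (ν c)]
  congr 1
  rw [Finset.smul_sum]
  refine Fintype.sum_equiv (Equiv.mulRight c) _ _ fun k => ?_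
  calc (ν k)⁻¹ • σ (k : G) (σ (c : G) w)
      = (ν k)⁻¹ • σ ((k : G) * (c : G)) w := by rw [map_mul]; rfl
    _ = ν c • (ν (Equiv.mulRight c k))⁻¹ • σ (((Equiv.mulRight c k : ↥K)) : G) w := by
        have h1 : (((Equiv.mulRight c k : ↥K)) : G) = (k : G) * (c : G) := rfl
        have h2 : ν (Equiv.mulRight c k) = ν k * ν c := by
          show ν (k * c) = _ ; rw [map_mul]
        rw [h1, h2, smul_smul]
        congr 1
        rw [mul_inv]
        field_simp [nu_ne_zero K ν c, nu_ne_zero K ν k]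

lemma pAvg_idem (w : W) : pAvg K ν σ (pAvg K ν σ w) = pAvg K ν σ w := by
  conv_lhs => rw [pAvg_apply K ν σ (pAvg K ν σ w)]
  have h : ∀ k : ↥K, (ν k)⁻¹ • σ (k : G) (pAvg K ν σ w) = pAvg K ν σ w := by
    intro k
    rw [sigma_pAvg, smul_smul, inv_mul_cancel₀ (nu_ne_zero K ν k), one_smul]
  rw [Finset.sum_congr rfl fun k _ => h k]
  rw [Finset.sum_const, Finset.card_univ, ← Nat.cast_smul_eq_nsmul ℂ, smul_smul,
    inv_mul_cancel₀ (cardK_ne_zero K), one_smul]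


/-- The "Hecke operators" `p ∘ σ(g) ∘ p`. -/
def PhiOp (g : G) : W →ₗ[ℂ] W :=
  pAvg K ν σ ∘ₗ (σ g).toLinearMap ∘ₗ pAvg K ν σ

lemma PhiOp_apply (g : G) (w : W) : PhiOp K ν σ g w = pAvg K ν σ (σ g (pAvg K ν σ w)) := rfl

lemma PhiOp_conj (c c' : ↥K) (x : G) :
    PhiOp K ν σ ((c : G) * x * (c' : G)) = (ν c * ν c') • PhiOp K ν σ x := by
  ext w
  rw [LinearMap.smul_apply, PhiOp_apply, PhiOp_apply]
  rw [map_mul, map_mul]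
  have h1 : σ (c' : G) (pAvg K ν σ w) = ν c' • pAvg K ν σ w := sigma_pAvg K ν σ c' w
  calc pAvg K ν σ ((σ (c:G) * σ x) ((σ (c':G)) (pAvg K ν σ w)))
      = pAvg K ν σ (σ (c:G) (σ x (ν c' • pAvg K ν σ w))) := by rw [h1]; rfl
    _ = ν c' • pAvg K ν σ (σ (c:G) (σ x (pAvg K ν σ w))) := by
        rw [map_smul, map_smul, map_smul]
    _ = ν c' • (ν c • pAvg K ν σ (σ x (pAvg K ν σ w))) := by rw [pAvg_sigma]
    _ = (ν c * ν c') • pAvg K ν σ (σ x (pAvg K ν σ w)) := by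
        rw [smul_smul]; ring_nf

lemma PhiOp_comp (g h : G) :
    PhiOp K ν σ g ∘ₗ PhiOp K ν σ h
      = (Fintype.card ↥K : ℂ)⁻¹ • ∑ k : ↥K, (ν k)⁻¹ • PhiOp K ν σ (g * (k : G) * h) := by
  ext w
  rw [LinearMap.comp_apply, LinearMap.smul_apply, LinearMap.sum_apply]
  rw [PhiOp_apply, PhiOp_apply, pAvg_idem]
  conv_lhs => rw [show pAvg K ν σ (σ h (pAvg K ν σ w))
    = (Fintype.card ↥K : ℂ)⁻¹ • ∑ k : ↥K, (ν k)⁻¹ • σ (k:G) (σ h (pAvg K ν σ w)) from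
      pAvg_apply K ν σ _]
  rw [map_smul, map_sum, map_smul, map_sum]
  congr 1
  refine Finset.sum_congr rfl fun k _ => ?_
  rw [map_smul, map_smul, LinearMap.smul_apply, PhiOp_apply]
  congr 2
  rw [map_mul, map_mul]
  rfl

variable (τ : G → G)

lemma PhiOp_tau (hconj : ∀ g : G, ∃ c : ↥K, τ g = (c : G)⁻¹ * g * (c : G)) (x : G) :
    PhiOp K ν σ (τ x) = PhiOp K ν σ x := by
  obtain ⟨c, hc⟩ := hconj x
  have h1 : ((c⁻¹ : ↥K) : G) = (c : G)⁻¹ := rfl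
  rw [hc, ← h1, PhiOp_conj K ν σ c⁻¹ c x, ← map_mul, inv_mul_cancel, map_one, one_smul]

lemma PhiOp_comm
    (hmul : ∀ x y : G, τ (x * y) = τ y * τ x)
    (hK : ∀ k : ↥K, τ (k : G) = (k : G))
    (hconj : ∀ g : G, ∃ c : ↥K, τ g = (c : G)⁻¹ * g * (c : G)) (g h : G) :
    PhiOp K ν σ g ∘ₗ PhiOp K ν σ h = PhiOp K ν σ h ∘ₗ PhiOp K ν σ g := by
  rw [PhiOp_comp, PhiOp_comp]
  congr 1
  obtain ⟨cg, hcg⟩ := hconj g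
  obtain ⟨ch, hch⟩ := hconj h
  refine Fintype.sum_equiv ((Equiv.mulLeft ch).trans (Equiv.mulRight cg⁻¹)) _ _ fun k => ?_
  set j : ↥K := ((Equiv.mulLeft ch).trans (Equiv.mulRight cg⁻¹)) k with hj
  have hjval : (j : G) = (ch : G) * (k : G) * (cg : G)⁻¹ := rfl
  have hstep : PhiOp K ν σ (g * (k : G) * h) = (ν ch⁻¹ * ν cg) • PhiOp K ν σ (h * (j : G) * g) := by
    have e1 : PhiOp K ν σ (g * (k : G) * h) = PhiOp K ν σ (τ (g * (k : G) * h)) :=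
      (PhiOp_tau K ν σ τ hconj _).symm
    have e2 : τ (g * (k : G) * h) = ((ch⁻¹ : ↥K) : G) * (h * (j : G) * g) * ((cg : ↥K) : G) := by
      rw [hmul, hmul, hK k, hcg, hch]
      show _ = ((ch : G))⁻¹ * (h * ((ch : G) * (k : G) * (cg : G)⁻¹) * g) * (cg : G)
      group
    rw [e1, e2, PhiOp_conj]
  rw [hstep]
  have hnuj : ν j = ν ch * ν k * (ν cg)⁻¹ := by
    have : j = ch * k * cg⁻¹ := rfl
    rw [this, map_mul, map_mul, nu_inv]
  rw [smul_smul, hnuj]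
  congr 1
  rw [nu_inv]
  field_simp [nu_ne_zero K ν cg, nu_ne_zero K ν ch, nu_ne_zero K ν k]


theorem gelfand_multfree
    (hmul : ∀ x y : G, τ (x * y) = τ y * τ x)
    (hK : ∀ k : ↥K, τ (k : G) = (k : G))
    (hconj : ∀ g : G, ∃ c : ↥K, τ g = (c : G)⁻¹ * g * (c : G)) :
    IsMultFreeChar K ν := by
  intro W _ _ _ σ hirr
  set p := pAvg K ν σ with hp
  set R := LinearMap.range p with hRdef
  -- orbit span
  have horbit : ∀ u : W, u ≠ 0 →
      Submodule.span ℂ (Set.range fun g : G => σ g u) = ⊤ := by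
    intro u hu
    have hinv : ∀ (h : G) (x : W), x ∈ Submodule.span ℂ (Set.range fun g : G => σ g u) →
        σ h x ∈ Submodule.span ℂ (Set.range fun g : G => σ g u) := by
      intro h x hx
      have hmap : (σ h).toLinearMap x ∈
          Submodule.map (σ h).toLinearMap (Submodule.span ℂ (Set.range fun g : G => σ g u)) :=
        Submodule.mem_map_of_mem hx
      rw [Submodule.map_span] at hmap
      refine Submodule.span_le.mpr ?_ hmap
      rintro y ⟨y', ⟨g, rfl⟩, rfl⟩
      refine Submodule.subset_span ⟨h * g, ?_⟩
      show σ (h * g) u = (σ h).toLinearMap (σ g u)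
      rw [map_mul]; rfl
    rcases hirr.2 _ hinv with hbot | htop
    · exfalso
      have : u ∈ Submodule.span ℂ (Set.range fun g : G => σ g u) :=
        Submodule.subset_span ⟨1, by show σ (1 : G) u = u; rw [map_one]; rfl⟩
      rw [hbot, Submodule.mem_bot] at this
      exact hu this
    · exact htop
  have hpfix : ∀ u : W, u ∈ R → p u = u := by
    rintro u ⟨x, rfl⟩
    exact pAvg_idem K ν σ x
  have hPhiR : ∀ (g : G) (x : W), PhiOp K ν σ g x ∈ R := fun g x => ⟨σ g (p x), rfl⟩
  have claimB : ∀ u : W, u ∈ R → u ≠ 0 → ∀ v ∈ R,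
      v ∈ Submodule.span ℂ (Set.range fun g : G => PhiOp K ν σ g u) := by
    intro u huR hu v hvR
    obtain ⟨x, rfl⟩ := hvR
    have hx : x ∈ Submodule.span ℂ (Set.range fun g : G => σ g u) := by
      rw [horbit u hu]; trivial
    have hmap : p x ∈ Submodule.map p (Submodule.span ℂ (Set.range fun g : G => σ g u)) :=
      Submodule.mem_map_of_mem hx
    rw [Submodule.map_span] at hmap
    refine Submodule.span_le.mpr ?_ hmap
    rintro y ⟨y', ⟨g, rfl⟩, rfl⟩
    refine Submodule.subset_span ⟨g, ?_⟩
    show PhiOp K ν σ g u = p (σ g u)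
    rw [PhiOp_apply, hpfix u huR]
  -- finrank R ≤ 1
  have hfinR : Module.finrank ℂ ↥R ≤ 1 := by
    by_cases hR : R = ⊥
    · rw [hR]
      simp
    · obtain ⟨u, huR, hu⟩ := Submodule.exists_mem_ne_zero_of_ne_bot hR
      have hscalar : ∀ g₀ : G, ∃ lam : ℂ, ∀ w ∈ R, PhiOp K ν σ g₀ w = lam • w := by
        intro g₀
        haveI : Nontrivial ↥R := Submodule.nontrivial_iff_ne_bot.mpr hR
        set T : ↥R →ₗ[ℂ] ↥R := (PhiOp K ν σ g₀).restrict (fun x _ => hPhiR g₀ x) with hT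
        obtain ⟨lam, hlam⟩ := Module.End.exists_eigenvalue T
        obtain ⟨v, hv⟩ := hlam.exists_hasEigenvector
        have hveq : PhiOp K ν σ g₀ (v : W) = lam • (v : W) := by
          have := hv.apply_eq_smul
          have h2 := congrArg (Subtype.val) this
          simpa [hT, LinearMap.restrict_apply] using h2
        have hvne : (v : W) ≠ 0 := fun h0 => hv.right (by exact_mod_cast Subtype.ext h0)
        refine ⟨lam, fun w hw => ?_⟩
        have hw' : w ∈ Submodule.span ℂ (Set.range fun g : G => PhiOp K ν σ g (v : W)) :=
          claimB (v : W) v.2 hvne w hw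
        have hker : Submodule.span ℂ (Set.range fun g : G => PhiOp K ν σ g (v : W)) ≤
            LinearMap.ker (PhiOp K ν σ g₀ - lam • LinearMap.id) := by
          refine Submodule.span_le.mpr ?_
          rintro y ⟨g, rfl⟩
          show PhiOp K ν σ g (v : W) ∈ LinearMap.ker (PhiOp K ν σ g₀ - lam • LinearMap.id)
          rw [LinearMap.mem_ker, LinearMap.sub_apply, LinearMap.smul_apply, LinearMap.id_apply,
            sub_eq_zero]
          calc PhiOp K ν σ g₀ (PhiOp K ν σ g (v : W))
              = (PhiOp K ν σ g₀ ∘ₗ PhiOp K ν σ g) (v : W) := rfl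
            _ = (PhiOp K ν σ g ∘ₗ PhiOp K ν σ g₀) (v : W) := by
                rw [PhiOp_comm K ν σ τ hmul hK hconj]
            _ = PhiOp K ν σ g (lam • (v : W)) := by rw [LinearMap.comp_apply, hveq]
            _ = lam • PhiOp K ν σ g (v : W) := by rw [map_smul]
        have := hker hw'
        rw [LinearMap.mem_ker, LinearMap.sub_apply, LinearMap.smul_apply, LinearMap.id_apply,
          sub_eq_zero] at this
        exact this
      have hRle : R ≤ Submodule.span ℂ {u} := by
        intro v hv
        have hvs := claimB u huR hu v hv
        refine Submodule.span_le.mpr ?_ hvs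
        rintro y ⟨g, rfl⟩
        obtain ⟨lam, hlam⟩ := hscalar g
        show PhiOp K ν σ g u ∈ (Submodule.span ℂ {u} : Set W)
        rw [SetLike.mem_coe, hlam u huR]
        exact Submodule.smul_mem _ _ (Submodule.mem_span_singleton_self u)
      calc Module.finrank ℂ ↥R ≤ Module.finrank ℂ ↥(Submodule.span ℂ {u}) :=
            Submodule.finrank_mono hRle
        _ = 1 := finrank_span_singleton hu
  -- injection of homGIndChar into the dual of R
  have hkey : ∀ A : ↥(homGIndChar K ν σ), ∀ (w : W) (g : G),
      (A : W →ₗ[ℂ] (G → ℂ)) w g = (A : W →ₗ[ℂ] (G → ℂ)) (σ g⁻¹ w) 1 := by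
    intro A w g
    have h2 := A.2.2 g⁻¹ w
    have := congrFun h2 1
    rw [this]
    simp [translate]
  have hL : ∀ A : ↥(homGIndChar K ν σ), ∀ (k : ↥K) (w : W),
      (A : W →ₗ[ℂ] (G → ℂ)) (σ (k : G) w) 1 = ν k * ((A : W →ₗ[ℂ] (G → ℂ)) w 1) := by
    intro A k w
    have h1 := hkey A w ((k : G))⁻¹
    rw [inv_inv] at h1
    have h2 := A.2.1 w 1 k⁻¹
    have h3 : ((k⁻¹ : ↥K) : G) = ((k : G))⁻¹ := rfl
    rw [h3, one_mul] at h2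
    rw [← h1, h2, nu_inv, inv_inv]
  have hP : ∀ A : ↥(homGIndChar K ν σ), ∀ w : W,
      (A : W →ₗ[ℂ] (G → ℂ)) (p w) 1 = (A : W →ₗ[ℂ] (G → ℂ)) w 1 := by
    intro A w
    rw [hp, pAvg_apply, map_smul, map_sum]
    have : ∀ k : ↥K, ((A : W →ₗ[ℂ] (G → ℂ)) ((ν k)⁻¹ • σ (k : G) w)) 1
        = (A : W →ₗ[ℂ] (G → ℂ)) w 1 := by
      intro k
      rw [map_smul]
      have : ((ν k)⁻¹ • (A : W →ₗ[ℂ] (G → ℂ)) (σ (k : G) w)) 1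
          = (ν k)⁻¹ * ((A : W →ₗ[ℂ] (G → ℂ)) (σ (k : G) w) 1) := rfl
      rw [this, hL A k w, ← mul_assoc, inv_mul_cancel₀ (nu_ne_zero K ν k), one_mul]
    have hsum : ((∑ k : ↥K, (A : W →ₗ[ℂ] (G → ℂ)) ((ν k)⁻¹ • σ (k : G) w)) : G → ℂ) 1
        = ∑ k : ↥K, ((A : W →ₗ[ℂ] (G → ℂ)) ((ν k)⁻¹ • σ (k : G) w)) 1 := by
      simp [Finset.sum_apply]
    have hsm : (((Fintype.card ↥K : ℂ)⁻¹ • ∑ k : ↥K,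
        (A : W →ₗ[ℂ] (G → ℂ)) ((ν k)⁻¹ • σ (k : G) w)) : G → ℂ) 1
        = (Fintype.card ↥K : ℂ)⁻¹ * ((∑ k : ↥K,
        (A : W →ₗ[ℂ] (G → ℂ)) ((ν k)⁻¹ • σ (k : G) w)) : G → ℂ) 1 := rfl
    rw [hsm, hsum, Finset.sum_congr rfl fun k _ => this k, Finset.sum_const, Finset.card_univ]
    have : ((Fintype.card ↥K) : ℂ)⁻¹ * ((Fintype.card ↥K) •
        ((A : W →ₗ[ℂ] (G → ℂ)) w 1)) = (A : W →ₗ[ℂ] (G → ℂ)) w 1 := by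
      rw [nsmul_eq_mul, ← mul_assoc, inv_mul_cancel₀ (cardK_ne_zero K), one_mul]
    exact this
  let J : ↥(homGIndChar K ν σ) →ₗ[ℂ] (↥R →ₗ[ℂ] ℂ) :=
    { toFun := fun A =>
        { toFun := fun v => (A : W →ₗ[ℂ] (G → ℂ)) (v : W) 1
          map_add' := by intro v v'; simp
          map_smul' := by intro c v; simp }
      map_add' := by intro A B; ext v; simp
      map_smul' := by intro c A; ext v; simp }
  have hJinj : Function.Injective J := by
    rw [injective_iff_map_eq_zero]
    intro A hA
    have hA' : ∀ v : ↥R, (A : W →ₗ[ℂ] (G → ℂ)) (v : W) 1 = 0 := by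
      intro v
      have := congrArg (fun (f : ↥R →ₗ[ℂ] ℂ) => f v) hA
      simpa [J] using this
    have hzero1 : ∀ w : W, (A : W →ₗ[ℂ] (G → ℂ)) w 1 = 0 := by
      intro w
      rw [← hP A w]
      exact hA' ⟨p w, ⟨w, rfl⟩⟩
    have hzero : ∀ (w : W) (g : G), (A : W →ₗ[ℂ] (G → ℂ)) w g = 0 := by
      intro w g
      rw [hkey A w g]
      exact hzero1 _
    apply Subtype.ext
    apply LinearMap.ext
    intro w
    funext g
    exact hzero w g
  haveI : FiniteDimensional ℂ ↥R := inferInstance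
  calc Module.finrank ℂ ↥(homGIndChar K ν σ)
      ≤ Module.finrank ℂ (↥R →ₗ[ℂ] ℂ) := LinearMap.finrank_le_finrank_of_injective hJinj
    _ = Module.finrank ℂ ↥R := Subspace.dual_finrank_eq
    _ ≤ 1 := hfinR

end Gelfand


section CartanConcrete

open Matrix

variable {F}

/-- The transpose of an invertible matrix, as a unit. -/
def transposeUnit (g : Matrix.GeneralLinearGroup (Fin 2) F) :
    Matrix.GeneralLinearGroup (Fin 2) F where
  val := (g : Matrix (Fin 2) (Fin 2) F)ᵀ
  inv := ((g⁻¹ : Matrix.GeneralLinearGroup (Fin 2) F) : Matrix (Fin 2) (Fin 2) F)ᵀ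
  val_inv := by
    rw [← Matrix.transpose_mul]
    have h : ((g⁻¹ : Matrix.GeneralLinearGroup (Fin 2) F) : Matrix (Fin 2) (Fin 2) F)
        * (g : Matrix (Fin 2) (Fin 2) F) = 1 := g.inv_val
    rw [h, Matrix.transpose_one]
  inv_val := by
    rw [← Matrix.transpose_mul]
    have h : (g : Matrix (Fin 2) (Fin 2) F)
        * ((g⁻¹ : Matrix.GeneralLinearGroup (Fin 2) F) : Matrix (Fin 2) (Fin 2) F) = 1 := g.val_inv
    rw [h, Matrix.transpose_one]

/-- The diagonal matrix `diag(η, 1)` as a unit. -/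
def sUnit (eta : Fˣ) : Matrix.GeneralLinearGroup (Fin 2) F where
  val := !![(eta : F), 0; 0, 1]
  inv := !![((eta : F))⁻¹, 0; 0, 1]
  val_inv := by
    rw [Matrix.mul_fin_two]
    ext i j
    fin_cases i <;> fin_cases j <;>
      simp [Matrix.one_fin_two, mul_inv_cancel₀ (Units.ne_zero eta)]
  inv_val := by
    rw [Matrix.mul_fin_two]
    ext i j
    fin_cases i <;> fin_cases j <;>
      simp [Matrix.one_fin_two, inv_mul_cancel₀ (Units.ne_zero eta)]

/-- The anti-automorphism `g ↦ s gᵀ s⁻¹`. -/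
def tauGL (eta : Fˣ) (g : Matrix.GeneralLinearGroup (Fin 2) F) :
    Matrix.GeneralLinearGroup (Fin 2) F :=
  sUnit eta * transposeUnit g * (sUnit eta)⁻¹

lemma tauGL_mul (eta : Fˣ) (x y : Matrix.GeneralLinearGroup (Fin 2) F) :
    tauGL eta (x * y) = tauGL eta y * tauGL eta x := by
  have h : transposeUnit (x * y) = transposeUnit y * transposeUnit x := by
    apply Units.ext
    show ((x * y : Matrix.GeneralLinearGroup (Fin 2) F) : Matrix (Fin 2) (Fin 2) F)ᵀ = _
    rw [Units.val_mul, Matrix.transpose_mul]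
    rfl
  unfold tauGL
  rw [h]
  group

lemma tauGL_val (eta : Fˣ) (g : Matrix.GeneralLinearGroup (Fin 2) F) :
    ((tauGL eta g : Matrix.GeneralLinearGroup (Fin 2) F) : Matrix (Fin 2) (Fin 2) F)
      = !![(eta : F), 0; 0, 1] * (g : Matrix (Fin 2) (Fin 2) F)ᵀ * !![((eta : F))⁻¹, 0; 0, 1] := by
  rfl

lemma tauGL_fixed (eta : Fˣ) (g : Matrix.GeneralLinearGroup (Fin 2) F)
    (h : (g : Matrix (Fin 2) (Fin 2) F) 0 1 = (eta : F) * (g : Matrix (Fin 2) (Fin 2) F) 1 0) :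
    tauGL eta g = g := by
  apply Units.ext
  rw [tauGL_val]
  set M := (g : Matrix (Fin 2) (Fin 2) F) with hM
  have hM2 : M = !![M 0 0, (eta : F) * M 1 0; M 1 0, M 1 1] := by
    rw [Matrix.eta_fin_two M, h]
    norm_num
  rw [hM2]
  have ht : !![M 0 0, (eta : F) * M 1 0; M 1 0, M 1 1]ᵀ
      = !![M 0 0, M 1 0; (eta : F) * M 1 0, M 1 1] := by
    ext i j; fin_cases i <;> fin_cases j <;> simp
  rw [ht, Matrix.mul_fin_two, Matrix.mul_fin_two]
  ext i j
  fin_cases i <;> fin_cases j <;>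
    field_simp <;> simp [Units.ne_zero eta]

lemma tauGL_cartan (eta : Fˣ) (k : ↥(cartan F (eta : F))) :
    tauGL eta (k : Matrix.GeneralLinearGroup (Fin 2) F) = (k : Matrix.GeneralLinearGroup (Fin 2) F) := by
  obtain ⟨a, b, hk⟩ := k.2
  apply tauGL_fixed
  rw [hk]
  simp

lemma eta_nonsquare (hodd : Odd (Fintype.card F)) (eta : Fˣ)
    (heta : ∀ x : Fˣ, x ∈ Subgroup.zpowers eta) (a b : F) (hb : b ≠ 0) :
    a * a - (eta : F) * b * b ≠ 0 := by
  intro h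
  have ha : a ≠ 0 := by
    intro ha0
    rw [ha0, mul_zero, zero_sub, neg_eq_zero] at h
    exact (mul_ne_zero (mul_ne_zero (Units.ne_zero eta) hb) hb) h
  have hab : a * b⁻¹ ≠ 0 := mul_ne_zero ha (inv_ne_zero hb)
  set u : Fˣ := Units.mk0 (a * b⁻¹) hab with hu
  have hsq : eta = u * u := by
    apply Units.ext
    show (eta : F) = (a * b⁻¹) * (a * b⁻¹)
    have h' : a * a = (eta : F) * b * b := sub_eq_zero.mp h
    field_simp
    linear_combination -h'
  obtain ⟨n, hn⟩ := Subgroup.mem_zpowers_iff.mp (heta u)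
  have h2n : eta ^ (2 * n - 1) = 1 := by
    have : eta = eta ^ (2 * n) := by
      rw [two_mul, _root_.zpow_add, hn]
      exact hsq
    calc eta ^ (2 * n - 1) = eta ^ (2 * n) * eta⁻¹ := by
          rw [_root_.zpow_sub, zpow_one]
      _ = eta * eta⁻¹ := by rw [← this]
      _ = 1 := mul_inv_cancel _
  have hdvd : ((orderOf eta : ℤ)) ∣ (2 * n - 1) := orderOf_dvd_iff_zpow_eq_one.mpr h2n
  have hord : orderOf eta = Fintype.card F - 1 := by
    rw [orderOf_eq_card_of_forall_mem_zpowers heta, Nat.card_eq_fintype_card,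
      Fintype.card_units]
  obtain ⟨m, hm⟩ := hodd
  have heven : (2 : ℤ) ∣ (orderOf eta : ℤ) := by
    rw [hord]
    have : Fintype.card F - 1 = 2 * m := by omega
    rw [this]
    exact ⟨m, by push_cast; ring⟩
  have : (2 : ℤ) ∣ (2 * n - 1) := dvd_trans heven hdvd
  omega

lemma tauGL_conj (hodd : Odd (Fintype.card F)) (eta : Fˣ)
    (heta : ∀ x : Fˣ, x ∈ Subgroup.zpowers eta) (g : Matrix.GeneralLinearGroup (Fin 2) F) :
    ∃ c : ↥(cartan F (eta : F)),
      tauGL eta g = ((c : Matrix.GeneralLinearGroup (Fin 2) F))⁻¹ * g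
        * (c : Matrix.GeneralLinearGroup (Fin 2) F) := by
  set M := (g : Matrix (Fin 2) (Fin 2) F) with hMdef
  by_cases hy : M 0 1 = (eta : F) * M 1 0
  · exact ⟨1, by rw [tauGL_fixed eta g hy]; simp⟩
  · set a : F := (eta : F) * (M 0 0 - M 1 1) with hadef
    set b : F := -(M 0 1 - (eta : F) * M 1 0) with hbdef
    have hbne : b ≠ 0 := by
      rw [hbdef]
      intro h0
      apply hy
      exact sub_eq_zero.mp (neg_eq_zero.mp h0)
    have hdet : (!![a, (eta : F) * b; b, a] : Matrix (Fin 2) (Fin 2) F).det ≠ 0 := by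
      rw [Matrix.det_fin_two_of]
      intro h0
      refine eta_nonsquare hodd eta heta a b hbne ?_
      linear_combination h0
    set cGL : Matrix.GeneralLinearGroup (Fin 2) F :=
      Matrix.GeneralLinearGroup.mkOfDetNeZero _ hdet with hcGL
    have hcval : (cGL : Matrix (Fin 2) (Fin 2) F) = !![a, (eta : F) * b; b, a] := rfl
    have hmem : cGL ∈ cartan F (eta : F) := ⟨a, b, hcval⟩
    set c : ↥(cartan F (eta : F)) := ⟨cGL, hmem⟩ with hc
    refine ⟨c, ?_⟩
    have hfix : tauGL eta (g * cGL) = g * cGL := by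
      apply tauGL_fixed
      have hval : ((g * cGL : Matrix.GeneralLinearGroup (Fin 2) F) : Matrix (Fin 2) (Fin 2) F)
          = M * !![a, (eta : F) * b; b, a] := by
        rw [Units.val_mul, hcval]
      rw [hval]
      rw [Matrix.eta_fin_two M, Matrix.mul_fin_two]
      simp only [Matrix.cons_val', Matrix.cons_val_zero, Matrix.cons_val_one, Matrix.head_cons,
        Matrix.empty_val', Matrix.cons_val_fin_one, Matrix.head_fin_const, Matrix.of_apply]
      rw [hadef, hbdef]
      ring
    have hstep : tauGL eta (g * cGL) = (c : Matrix.GeneralLinearGroup (Fin 2) F) * tauGL eta g := by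
      rw [tauGL_mul]
      congr 1
      exact tauGL_cartan eta c
    rw [hfix] at hstep
    have h5 : tauGL eta g = ((c : Matrix.GeneralLinearGroup (Fin 2) F))⁻¹ * (g * cGL) := by
      rw [hstep]
      group
    rw [h5]
    exact (mul_assoc _ _ _).symm

end CartanConcrete

/-- Let `q` be an odd prime power and `η` a generator of `F_q*`.  Then for
every one-dimensional character `ν` of the Cartan subgroup `C`, the induced representation
`Ind_C^{GL(2,F_q)} ν` is multiplicity-free; i.e. `C` is a multiplicity-free subgroup. -/
theorem statement17 (hodd : Odd (Fintype.card F)) (eta : Fˣ)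
    (heta : ∀ x : Fˣ, x ∈ Subgroup.zpowers eta)
    (ν : ↥(cartan F (eta : F)) →* ℂ) :
    IsMultFreeChar (cartan F (eta : F)) ν := by
  haveI : Fintype ↥(cartan F (eta : F)) := Fintype.ofFinite _
  exact gelfand_multfree (cartan F (eta : F)) ν (tauGL eta) (tauGL_mul eta)
    (tauGL_cartan eta) (tauGL_conj hodd eta heta)

end GLMF
end
end
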